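/- arXiv:1607.03043 — 5 statements merged into one kernel-verified Lean document; each statement's English description precedes it below -/
import Mathlib

section
/- Let F_n be the free group on basis x_1,...,x_n. For an automorphism α in the pure symmetric automorphism group PΣ_n (i.e., (x_i)α = w_i^{-1} x_i w_i for some words w_i), and for j ≠ i, define χ_{i,j}(α) = φ_j(w_{i,α}), where w_{i,α} is the conjugating word for x_i and φ_j : F_n → ℤ sends x_j to 1 and all other generators to 0. Then χ_{i,j} : PΣ_n → ℤ is a group homomorphism. -/
/-- The homomorphism `φ_j : F_n → ℤ` (written multiplicatively) sending the generator `x_j`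
to `1` and all other generators to `0`. -/
def phiMap (n : ℕ) (j : Fin n) : FreeGroup (Fin n) →* Multiplicative ℤ :=
  FreeGroup.lift fun k => Multiplicative.ofAdd (if k = j then (1 : ℤ) else 0)

/-- An automorphism of the free group `F_n` is pure symmetric if it takes each basis element
to a conjugate of itself. -/
def IsPureSymmetric {n : ℕ} (α : MulAut (FreeGroup (Fin n))) : Prop :=
  ∀ i : Fin n, ∃ w : FreeGroup (Fin n),
    α (FreeGroup.of i) = w⁻¹ * FreeGroup.of i * w

open Finsupp SemidirectProduct


noncomputable def shiftHom : Multiplicative ℤ →* MulAut (Multiplicative (ℤ →₀ ℤ)) where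
  toFun k := AddEquiv.toMultiplicative (Finsupp.domCongr (α := ℤ) (β := ℤ) (M := ℤ)
    (Equiv.addRight (Multiplicative.toAdd k)))
  map_one' := by
    ext f : 1
    apply Finsupp.ext; intro x
    simp [Finsupp.domCongr, AddEquiv.toMultiplicative, Finsupp.equivMapDomain_apply]
    rfl
  map_mul' a b := by
    ext f : 1
    apply Finsupp.ext; intro x
    change Finsupp.equivMapDomain _ _ x = Finsupp.equivMapDomain _ (Finsupp.equivMapDomain _ _) x
    simp only [Finsupp.equivMapDomain_apply, Equiv.addRight_symm]
    congr 1
    simp [toAdd_mul]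
    ring

abbrev Lamplighter := Multiplicative (ℤ →₀ ℤ) ⋊[shiftHom] Multiplicative ℤ

noncomputable def ev : (ℤ →₀ ℤ) →+ ℤ := Finsupp.liftAddHom fun _ => AddMonoidHom.id ℤ

lemma ev_equivMapDomain (f : ℤ →₀ ℤ) (e : ℤ ≃ ℤ) : ev (Finsupp.equivMapDomain e f) = ev f := by
  simp [ev, Finsupp.liftAddHom, Finsupp.sum_equivMapDomain]
  rfl

lemma ev_single (a : ℤ) (m : ℤ) : ev (Finsupp.single a m) = m := by
  rw [ev, Finsupp.liftAddHom_apply_single]; rfl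

noncomputable def psiHom : Lamplighter →* Multiplicative ℤ :=
  SemidirectProduct.lift (AddMonoidHom.toMultiplicative ev) 1 (by
    intro g
    refine MonoidHom.ext fun f => ?_
    simp [shiftHom, AddEquiv.toMultiplicative, AddMonoidHom.toMultiplicative,
      ev_equivMapDomain]
    exact congrArg Multiplicative.ofAdd (ev_equivMapDomain _ _))

/-- a finitely supported function invariant under shift is zero -/
lemma shift_fixed_eq_zero (p : ℤ →₀ ℤ) (h : ∀ x : ℤ, p (x - 1) = p x) : p = 0 := by
  by_contra hp
  have hs : p.support.Nonempty := Finsupp.support_nonempty_iff.2 hp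
  set m := p.support.max' hs with hm
  have hmem : m ∈ p.support := p.support.max'_mem hs
  have h1 : p (m + 1) = p m := by simpa using (h (m + 1)).symm
  have hmem1 : m + 1 ∈ p.support := by
    rw [Finsupp.mem_support_iff] at hmem ⊢
    rw [h1]; exact hmem
  have := p.support.le_max' _ hmem1
  omega

noncomputable def thetaHom (n : ℕ) (i j : Fin n) : FreeGroup (Fin n) →* Lamplighter :=
  FreeGroup.lift fun k =>
    if k = i then SemidirectProduct.inr (Multiplicative.ofAdd (1 : ℤ))
    else if k = j then SemidirectProduct.inl (Multiplicative.ofAdd (Finsupp.single (0:ℤ) (1:ℤ)))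
    else 1

lemma psi_theta (n : ℕ) (i j : Fin n) (hij : j ≠ i) :
    (psiHom.comp (thetaHom n i j)) = phiMap n j := by
  apply FreeGroup.ext_hom
  intro k
  rw [MonoidHom.comp_apply, thetaHom, phiMap, FreeGroup.lift_apply_of, FreeGroup.lift_apply_of]
  by_cases hk : k = i
  · subst hk
    rw [if_pos rfl, if_neg (fun h => hij h.symm)]
    simp [psiHom]
  · rw [if_neg hk]
    by_cases hk2 : k = j
    · subst hk2
      rw [if_pos rfl, if_pos rfl, psiHom, SemidirectProduct.lift_inl]
      show Multiplicative.ofAdd (ev (Finsupp.single 0 1)) = Multiplicative.ofAdd (1:ℤ)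
      rw [ev_single]
    · rw [if_neg hk2, if_neg hk2]
      simp

/-- key: an element commuting with `of i` has trivial `phiMap j` -/
lemma phi_of_commute (n : ℕ) (i j : Fin n) (hij : j ≠ i) (c : FreeGroup (Fin n))
    (hc : c * FreeGroup.of i = FreeGroup.of i * c) : phiMap n j c = 1 := by
  have h := congrArg (thetaHom n i j) hc
  rw [map_mul, map_mul] at h
  have hti : thetaHom n i j (FreeGroup.of i) = SemidirectProduct.inr (Multiplicative.ofAdd (1:ℤ)) := by
    rw [thetaHom, FreeGroup.lift_apply_of, if_pos rfl]
  rw [hti] at h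
  set tc := thetaHom n i j c with htc
  -- extract left components
  have hleft := congrArg SemidirectProduct.left h
  simp only [SemidirectProduct.mul_left, SemidirectProduct.left_inr,
    SemidirectProduct.right_inr, map_one, mul_one, one_mul] at hleft
  -- hleft : tc.left = shiftHom (ofAdd 1) tc.left
  have hp : Multiplicative.toAdd tc.left = 0 := by
    apply shift_fixed_eq_zero
    intro x
    conv_rhs => rw [hleft]
    simp [shiftHom, AddEquiv.toMultiplicative, Finsupp.domCongr, Finsupp.equivMapDomain_apply, sub_eq_add_neg]
  -- now phiMap n j c = psiHom (θ c) = ev tc.left = 0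
  have := congrArg (fun f => f c) (psi_theta n i j hij)
  simp only [MonoidHom.comp_apply] at this
  rw [← this]
  show psiHom tc = 1
  rw [← SemidirectProduct.inl_left_mul_inr_right tc, map_mul]
  simp [psiHom, AddMonoidHom.toMultiplicative, hp]
  exact congrArg Multiplicative.ofAdd ((congrArg ev hp).trans (map_zero ev))

lemma phi_comp_pureSymmetric {n : ℕ} (j : Fin n) (β : MulAut (FreeGroup (Fin n)))
    (hβ : IsPureSymmetric β) (g : FreeGroup (Fin n)) :
    phiMap n j (β g) = phiMap n j g := by
  have : (phiMap n j).comp β.toMonoidHom = phiMap n j := by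
    apply FreeGroup.ext_hom
    intro k
    obtain ⟨v, hv⟩ := hβ k
    simp only [MonoidHom.comp_apply, MulEquiv.coe_toMonoidHom, hv, map_mul, map_inv]
    rw [mul_comm ((phiMap n j v)⁻¹) _, mul_assoc, inv_mul_cancel, mul_one]
  exact congrArg (fun f => f g) this

/-- `χ_{i,j}` is a group homomorphism `PΣ_n → ℤ`: it is well defined (independent of the
choice of conjugating words) and additive under composition of pure symmetric
automorphisms.  Here the value of `χ_{i,j}` on an automorphism is `φ_j` of any conjugating
word for `x_i`, and composition `α` followed by `β` corresponds to the automorphism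
`x ↦ β (α x)`. -/
theorem stmt0 (n : ℕ) (i j : Fin n) (hij : j ≠ i)
    (α β : MulAut (FreeGroup (Fin n)))
    (hα : IsPureSymmetric α) (hβ : IsPureSymmetric β)
    (wα wβ w : FreeGroup (Fin n))
    (hwα : α (FreeGroup.of i) = wα⁻¹ * FreeGroup.of i * wα)
    (hwβ : β (FreeGroup.of i) = wβ⁻¹ * FreeGroup.of i * wβ)
    (hw : β (α (FreeGroup.of i)) = w⁻¹ * FreeGroup.of i * w) :
    phiMap n j w = phiMap n j wα * phiMap n j wβ := by
  set X := FreeGroup.of i with hX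
  set u := wβ * β wα with hu
  have hE : w⁻¹ * X * w = u⁻¹ * X * u := by
    rw [← hw, hwα, map_mul, map_mul, map_inv, hwβ, hu]
    group
  have hc : (w * u⁻¹) * X = X * (w * u⁻¹) := by
    have h1 : X * w = w * u⁻¹ * X * u := by
      have : X * w = w * (w⁻¹ * X * w) := by group
      rw [this, hE]; group
    have h2 : X * (w * u⁻¹) = (X * w) * u⁻¹ := by group
    rw [h2, h1]; group
  have hcphi : phiMap n j (w * u⁻¹) = 1 := phi_of_commute n i j hij _ hc
  have hw' : w = (w * u⁻¹) * u := by group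
  rw [hw', map_mul, hcphi, one_mul, hu, map_mul, phi_comp_pureSymmetric j β hβ, mul_comm]
end

section
/- Let E = {1, 1̄, ..., n, n̄} and call a subset A ⊆ E a symmetric ideal edge if |A| ≥ 2, E \ A ≠ ∅, and there is exactly one index i such that A splits the pair {i, ī} (i.e., A contains exactly one of i, ī). Two ideal edges A, A' are compatible if A ⊆ A', A' ⊆ A, or A ∩ A' = ∅. For a positive character (so A is ascending iff A contains the unsplit-side element j, i.e., j ∈ A where {j, j̄} is the split pair), every collection of pairwise compatible ascending symmetric ideal edges is contained in the star of some hub Θ_i = E \ {ī}, i ∈ [n]. -/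
/-- `A` splits the pair `{i, ī}`: it contains exactly one of `i = (i, false)`,
`ī = (i, true)`. -/
def Splits {n : ℕ} (A : Finset (Fin n × Bool)) (i : Fin n) : Prop :=
  Xor' ((i, false) ∈ A) ((i, true) ∈ A)

/-- Symmetric ideal edge: `|A| ≥ 2`, `E \ A ≠ ∅`, and exactly one pair is split. -/
def IsSIE {n : ℕ} (A : Finset (Fin n × Bool)) : Prop :=
  2 ≤ A.card ∧ A ≠ Finset.univ ∧ ∃! i : Fin n, Splits A i

/-- Ascending (for a positive character): `A` contains the unbarred element `j = (j, false)`
of its split pair. -/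
def IsAscSIE {n : ℕ} (A : Finset (Fin n × Bool)) : Prop :=
  IsSIE A ∧ ∀ i : Fin n, Splits A i → (i, false) ∈ A

/-- Compatibility of ideal edges. -/
def Compat {n : ℕ} (A B : Finset (Fin n × Bool)) : Prop :=
  A ⊆ B ∨ B ⊆ A ∨ Disjoint A B

/-- Every collection of pairwise compatible ascending symmetric ideal edges (for a positive
character) is contained in the star of some hub `Θ_i = E \ {ī}`, i.e. all its members are
contained in a common `Θ_i`. -/
theorem stmt9 (n : ℕ) (hn : 1 ≤ n) (S : Set (Finset (Fin n × Bool)))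
    (hS : ∀ A ∈ S, IsAscSIE A)
    (hcompat : ∀ A ∈ S, ∀ B ∈ S, Compat A B) :
    ∃ i : Fin n, ∀ A ∈ S, A ⊆ Finset.univ.erase (i, true) := by
  rcases Set.eq_empty_or_nonempty S with h | hne
  · exact ⟨⟨0, hn⟩, by simp [h]⟩
  · have hfin : S.Finite := Set.toFinite S
    obtain ⟨A, hAS, hmax⟩ := Set.Finite.exists_maximalFor Finset.card S hfin hne
    obtain ⟨⟨hcard, hneu, j, hj, huniq⟩, hasc⟩ := hS A hAS
    have hjf : (j, false) ∈ A := hasc j hj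
    have hjt : (j, true) ∉ A := by
      rcases hj with ⟨_, h⟩ | ⟨_, h⟩
      · exact h
      · exact absurd hjf h
    refine ⟨j, fun B hBS x hxB => ?_⟩
    simp only [Finset.mem_erase, Finset.mem_univ, and_true]
    rintro rfl
    obtain ⟨_, hascB⟩ := hS B hBS
    rcases hcompat A hAS B hBS with hAB | hBA | hdis
    · have : A = B := Finset.eq_of_subset_of_card_le hAB
        (hmax hBS (Finset.card_le_card hAB))
      exact hjt (this ▸ hxB)
    · exact hjt (hBA hxB)
    · have hnf : (j, false) ∉ B := fun h =>
        (Finset.disjoint_left.mp hdis hjf) h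
      have : Splits B j := Or.inr ⟨hxB, hnf⟩
      exact hnf (hascB j this)
end

section
/- The complex I_n^↑(pos) of ascending symmetric ideal edges is not (n-2)-acyclic; i.e., its reduced homology in degree n-2 is nonzero. -/
/-- Ordered `d`-tuples of vertices of `I_n^↑(pos)` spanning a simplex (repetitions
allowed); these are the degree-`d` generators of the augmented ordered chain complex of
the simplicial complex, where a tuple of length `d` corresponds to a `(d-1)`-simplex and
the empty tuple (in degree `0`) provides the augmentation. -/
def SimpTup (n d : ℕ) : Type :=
  {f : Fin d → Finset (Fin n × Bool) //
    (∀ i, IsAscSIE (f i)) ∧ ∀ i j, Compat (f i) (f j)}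

/-- Augmented ordered simplicial chains of `I_n^↑(pos)`. -/
abbrev Chains (n d : ℕ) : Type := FreeAbelianGroup (SimpTup n d)

/-- The simplicial boundary map (the degree `1 → 0` part is the augmentation, so this
augmented complex computes reduced homology). -/
noncomputable def bd (n d : ℕ) : Chains n (d + 1) →+ Chains n d :=
  FreeAbelianGroup.lift fun f =>
    ∑ i : Fin (d + 1), ((-1 : ℤ) ^ (i : ℕ)) •
      FreeAbelianGroup.of
        (⟨f.1 ∘ Fin.succAbove i, fun j => f.2.1 _, fun j k => f.2.2 _ _⟩ : SimpTup n d)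

namespace SIEProof

lemma xor_def {a b : Prop} : Xor' a b ↔ (a ∧ ¬b) ∨ (b ∧ ¬a) := Iff.rfl

variable {N : ℕ}

/-- The basic ascending symmetric ideal edge determined by a split index `i` and a set
`S` of fully-included pairs. -/
def vtx (i : Fin N) (S : Finset (Fin N)) : Finset (Fin N × Bool) :=
  insert (i, false) (S ×ˢ (Finset.univ : Finset Bool))

lemma mem_vtx {i : Fin N} {S : Finset (Fin N)} {p : Fin N × Bool} :
    p ∈ vtx i S ↔ p = (i, false) ∨ p.1 ∈ S := by
  simp [vtx, Finset.mem_insert, Finset.mem_product]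

lemma vtx_subset {i j : Fin N} {S T : Finset (Fin N)} (hTS : T ⊆ S)
    (hj : j = i ∨ j ∈ S) : vtx j T ⊆ vtx i S := by
  intro p hp
  rcases mem_vtx.1 hp with h | h
  · subst h
    rcases hj with h | h
    · exact mem_vtx.2 (Or.inl (by rw [h]))
    · exact mem_vtx.2 (Or.inr h)
  · exact mem_vtx.2 (Or.inr (hTS h))

lemma splits_vtx_iff {i : Fin N} {S : Finset (Fin N)} (hiS : i ∉ S) (j : Fin N) :
    Splits (vtx i S) j ↔ j = i := by
  have hf : ((j, false) ∈ vtx i S) ↔ (j = i ∨ j ∈ S) := by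
    simp [mem_vtx, Prod.ext_iff]
  have ht : ((j, true) ∈ vtx i S) ↔ j ∈ S := by
    simp [mem_vtx, Prod.ext_iff]
  constructor
  · intro h
    rcases xor_def.1 h with ⟨h1, h2⟩ | ⟨h1, h2⟩
    · rcases hf.1 h1 with h | h
      · exact h
      · exact absurd (ht.2 h) h2
    · exact absurd (hf.2 (Or.inr (ht.1 h1))) h2
  · rintro rfl
    exact xor_def.2 (Or.inl ⟨hf.2 (Or.inl rfl), fun h => hiS (ht.1 h)⟩)

lemma vtx_isAscSIE {i : Fin N} {S : Finset (Fin N)} (hiS : i ∉ S) (hS : S.Nonempty) :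
    IsAscSIE (vtx i S) := by
  obtain ⟨s, hs⟩ := hS
  have hsi : s ≠ i := fun h => hiS (h ▸ hs)
  refine ⟨⟨?_, ?_, ?_⟩, ?_⟩
  · have h1 : (i, false) ∈ vtx i S := mem_vtx.2 (Or.inl rfl)
    have h2 : (s, false) ∈ vtx i S := mem_vtx.2 (Or.inr hs)
    have hne : (i, false) ≠ (s, false) := by
      simp only [Prod.mk.injEq, and_true, ne_eq]
      exact fun h => hsi h.symm
    exact Finset.one_lt_card.2 ⟨_, h1, _, h2, hne⟩
  · intro h
    have : (i, true) ∈ vtx i S := h ▸ Finset.mem_univ _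
    rcases mem_vtx.1 this with h' | h'
    · simp at h'
    · exact hiS h'
  · exact ⟨i, (splits_vtx_iff hiS i).2 rfl, fun j hj => (splits_vtx_iff hiS j).1 hj⟩
  · intro j hj
    rcases (splits_vtx_iff hiS j).1 hj with rfl
    exact mem_vtx.2 (Or.inl rfl)

open Classical in
noncomputable def splitIdx [NeZero N] (A : Finset (Fin N × Bool)) : Fin N :=
  if h : ∃ i, Splits A i then h.choose else 0

lemma splits_splitIdx [NeZero N] {A : Finset (Fin N × Bool)} (h : ∃ i, Splits A i) :
    Splits A (splitIdx A) := by
  classical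
  rw [splitIdx]
  rw [dif_pos h]
  exact h.choose_spec

lemma splitIdx_eq [NeZero N] {A : Finset (Fin N × Bool)}
    (hu : ∃! i : Fin N, Splits A i) {j : Fin N} (hj : Splits A j) : splitIdx A = j := by
  obtain ⟨i, hi, huniq⟩ := hu
  rw [huniq _ (splits_splitIdx ⟨i, hi⟩), huniq _ hj]

lemma splitIdx_vtx [NeZero N] {i : Fin N} {S : Finset (Fin N)}
    (hiS : i ∉ S) (hS : S.Nonempty) : splitIdx (vtx i S) = i :=
  splitIdx_eq (vtx_isAscSIE hiS hS).1.2.2 ((splits_vtx_iff hiS i).2 rfl)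

/-- The set of fully-included pairs of an edge. -/
def Sset (A : Finset (Fin N × Bool)) : Finset (Fin N) :=
  Finset.univ.filter fun j => (j, true) ∈ A

lemma eq_vtx [NeZero N] {A : Finset (Fin N × Bool)} (hA : IsAscSIE A) :
    A = vtx (splitIdx A) (Sset A) ∧ splitIdx A ∉ Sset A ∧ (Sset A).Nonempty := by
  set i := splitIdx A with hi
  have hsp : Splits A i := splits_splitIdx hA.1.2.2.exists
  have hf : (i, false) ∈ A := hA.2 i hsp
  have ht : (i, true) ∉ A := by
    rcases xor_def.1 hsp with ⟨_, h⟩ | ⟨_, h⟩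
    · exact h
    · exact absurd hf h
  have hoth : ∀ j : Fin N, j ≠ i → ((j, false) ∈ A ↔ (j, true) ∈ A) := by
    intro j hj
    by_contra hne
    have hs : Splits A j := by
      show Xor' _ _
      rw [xor_def]; tauto
    exact hj (hA.1.2.2.unique hs hsp)
  have hmemS : ∀ j, j ∈ Sset A ↔ (j, true) ∈ A := by intro j; simp [Sset]
  have hAeq : A = vtx i (Sset A) := by
    ext p
    obtain ⟨j, b⟩ := p
    rw [mem_vtx]
    cases b
    · constructor
      · intro h
        rcases eq_or_ne j i with rfl | hj
        · exact Or.inl rfl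
        · exact Or.inr ((hmemS j).2 ((hoth j hj).1 h))
      · rintro (h | h)
        · rw [Prod.mk.injEq] at h
          rw [h.1]; exact hf
        · rcases eq_or_ne j i with rfl | hj
          · exact hf
          · exact (hoth j hj).2 ((hmemS j).1 h)
    · constructor
      · intro h; exact Or.inr ((hmemS j).2 h)
      · rintro (h | h)
        · exact absurd h (by simp)
        · exact (hmemS j).1 h
  refine ⟨hAeq, fun h => ht ((hmemS i).1 h), ?_⟩
  by_contra hne
  rw [Finset.not_nonempty_iff_eq_empty] at hne
  have hsing : A = {(i, false)} := by
    rw [hAeq, hne]; simp [vtx]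
  have h2 := hA.1.1
  rw [hsing, Finset.card_singleton] at h2
  omega

lemma compat_vtx {i j : Fin N} {S T : Finset (Fin N)} (hij : i ≠ j)
    (hc : Compat (vtx i S) (vtx j T)) :
    insert i S ⊆ T ∨ insert j T ⊆ S ∨ Disjoint (insert i S) (insert j T) := by
  have key : ∀ (a b : Fin N) (U V : Finset (Fin N)), a ≠ b → vtx a U ⊆ vtx b V →
      insert a U ⊆ V := by
    intro a b U V hab hsub m hm
    rcases Finset.mem_insert.1 hm with rfl | hmU
    · have h := hsub (mem_vtx.2 (Or.inl rfl))
      rcases mem_vtx.1 h with h' | h'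
      · exact absurd (congrArg Prod.fst h') hab
      · exact h'
    · have h := hsub (mem_vtx.2 (Or.inr hmU) : (m, true) ∈ vtx a U)
      rcases mem_vtx.1 h with h' | h'
      · exact absurd (congrArg Prod.snd h') (by simp)
      · exact h'
  rcases hc with h | h | h
  · exact Or.inl (key i j S T hij h)
  · exact Or.inr (Or.inl (key j i T S hij.symm h))
  · refine Or.inr (Or.inr (Finset.disjoint_left.2 fun {m} hmi hmj => ?_))
    have h1 : (m, false) ∈ vtx i S := by
      rcases Finset.mem_insert.1 hmi with rfl | h'
      · exact mem_vtx.2 (Or.inl rfl)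
      · exact mem_vtx.2 (Or.inr h')
    have h2 : (m, false) ∈ vtx j T := by
      rcases Finset.mem_insert.1 hmj with rfl | h'
      · exact mem_vtx.2 (Or.inl rfl)
      · exact mem_vtx.2 (Or.inr h')
    exact Finset.disjoint_left.1 h h1 h2

/-- Key combinatorial lemma: there is no family of (supports of) pairwise compatible
ascending symmetric ideal edges realizing every index of `U` as a split index, with all
supports inside `U`. -/
lemma key_lemma : ∀ (m : ℕ) (U : Finset (Fin N)) (S : Fin N → Finset (Fin N)),
    U.card ≤ m →
    (∀ k ∈ U, (S k).Nonempty) →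
    (∀ k ∈ U, k ∉ S k) →
    (∀ k ∈ U, insert k (S k) ⊆ U) →
    (∀ k ∈ U, ∀ l ∈ U, k ≠ l →
      insert k (S k) ⊆ S l ∨ insert l (S l) ⊆ S k ∨
        Disjoint (insert k (S k)) (insert l (S l))) →
    U = ∅ := by
  intro m
  induction m with
  | zero => intro U S hcard _ _ _ _; exact Finset.card_eq_zero.1 (Nat.le_zero.1 hcard)
  | succ m ih =>
    intro U S hcard h1 h2 h3 h4
    by_contra hU
    obtain ⟨k₀, hk₀, hmax⟩ := Finset.exists_max_image U (fun k => (S k).card)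
      (Finset.nonempty_iff_ne_empty.2 hU)
    have hU'sub : S k₀ ⊆ U := (Finset.subset_insert _ _).trans (h3 k₀ hk₀)
    have hmem : ∀ l ∈ S k₀, l ∈ U := fun l hl => hU'sub hl
    have hsub : ∀ l ∈ S k₀, insert l (S l) ⊆ S k₀ := by
      intro l hl
      have hlU := hmem l hl
      have hlk : k₀ ≠ l := fun h => h2 k₀ hk₀ (h ▸ hl)
      rcases h4 k₀ hk₀ l hlU hlk with h | h | h
      · exfalso
        have hc1 : (S k₀).card + 1 ≤ (S l).card := by
          have hcc := Finset.card_le_card h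
          rwa [Finset.card_insert_of_notMem (h2 k₀ hk₀)] at hcc
        have := hmax l hlU
        omega
      · exact h
      · exact absurd (Finset.mem_insert_self l (S l))
          (Finset.disjoint_left.1 h (Finset.mem_insert_of_mem hl))
    have hcard' : (S k₀).card ≤ m := by
      have hss : S k₀ ⊂ U :=
        (Finset.ssubset_iff_of_subset hU'sub).2 ⟨k₀, hk₀, h2 k₀ hk₀⟩
      have := Finset.card_lt_card hss
      omega
    have hempty : S k₀ = ∅ := ih (S k₀) S hcard'
      (fun k hk => h1 k (hmem k hk))
      (fun k hk => h2 k (hmem k hk))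
      hsub
      (fun k hk l hl hkl => h4 k (hmem k hk) l (hmem l hl) hkl)
    exact (h1 k₀ hk₀).ne_empty hempty


/-! ### The determinant cocycle -/

/-- 0/1 matrix with rows the basis vectors indexed by the values of `h`. -/
def PM {m : ℕ} (h : Fin m → Fin m) : Matrix (Fin m) (Fin m) ℚ :=
  Matrix.of fun r c => if h r = c then 1 else 0

lemma det_PM_eq_zero {m : ℕ} {h : Fin m → Fin m} (hni : ¬ Function.Injective h) :
    (PM h).det = 0 := by
  simp only [Function.Injective, not_forall] at hni
  obtain ⟨a, b, hab, hne⟩ := hni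
  exact Matrix.det_zero_of_row_eq hne (funext fun c => by simp [PM, hab])

/-- Bordered matrix: column of ones glued to the left of the (rectangular) matrix of
basis rows for `H`. -/
def bigX {m : ℕ} (H : Fin (m + 1) → Fin m) : Matrix (Fin (m + 1)) (Fin (m + 1)) ℚ :=
  Matrix.of fun r c => Fin.cases 1 (fun c' => if H r = c' then 1 else 0) c

lemma det_bigX {m : ℕ} (H : Fin (m + 1) → Fin m) : (bigX H).det = 0 := by
  rw [← Matrix.exists_mulVec_eq_zero_iff]
  refine ⟨Fin.cases (-1) (fun _ => 1), ?_, ?_⟩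
  · intro h
    have h0 := congrFun h 0
    simp at h0
  · funext r
    show ∑ c, bigX H r c * (Fin.cases (-1) (fun _ => 1) c) = 0
    rw [Fin.sum_univ_succ]
    simp [bigX, Finset.sum_ite_eq]

lemma bigX_submatrix {m : ℕ} (H : Fin (m + 1) → Fin m) (r : Fin (m + 1)) :
    (bigX H).submatrix r.succAbove Fin.succ = PM (fun x => H (r.succAbove x)) := by
  ext r' c'
  simp [bigX, PM, Matrix.submatrix_apply]

lemma sum_faces {d : ℕ} (h : Fin (d + 2) → Fin (d + 2)) (hni : ¬ Function.Injective h)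
    (x₀ : Fin (d + 2)) :
    ∑ i : Fin (d + 2), (-1 : ℚ) ^ (i : ℕ) *
      (PM (Fin.snoc (fun t => h (i.succAbove t)) x₀)).det = 0 := by
  set H : Fin (d + 3) → Fin (d + 2) := Fin.snoc h x₀ with hH
  have h1 : ∀ i : Fin (d + 2),
      (Fin.snoc (fun t => h (i.succAbove t)) x₀ : Fin (d + 2) → Fin (d + 2))
        = fun x => H ((Fin.castSucc i).succAbove x) := by
    intro i
    funext x
    refine Fin.lastCases ?_ (fun s => ?_) x
    · rw [Fin.snoc_last]
      have hsa : (Fin.castSucc i).succAbove (Fin.last (d + 1)) = Fin.last (d + 2) := by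
        rw [Fin.succAbove_of_le_castSucc _ _ (by
          rw [Fin.le_def]
          simp [Fin.le_def]
          omega)]
        exact Fin.succ_last _
      rw [hsa, hH, Fin.snoc_last]
    · rw [Fin.snoc_castSucc]
      rcases lt_or_ge s.castSucc i with hlt | hle
      · have e1 : i.succAbove s = s.castSucc := Fin.succAbove_of_castSucc_lt _ _ hlt
        have e2 : (i.castSucc).succAbove s.castSucc = s.castSucc.castSucc :=
          Fin.succAbove_of_castSucc_lt _ _ (by
            rw [Fin.lt_def] at hlt ⊢; simpa using hlt)
        rw [e1, e2, hH, Fin.snoc_castSucc]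
      · have e1 : i.succAbove s = s.succ := Fin.succAbove_of_le_castSucc _ _ hle
        have e2 : (i.castSucc).succAbove s.castSucc = s.castSucc.succ :=
          Fin.succAbove_of_le_castSucc _ _ (by
            rw [Fin.le_def] at hle ⊢; simpa using hle)
        rw [e1, e2, Fin.succ_castSucc, hH, Fin.snoc_castSucc]
  have h2 : (fun x => H ((Fin.last (d + 2)).succAbove x)) = h := by
    funext x
    rw [Fin.succAbove_last, hH, Fin.snoc_castSucc]
  have hcol : ∀ r : Fin (d + 3), bigX H r 0 = 1 := fun r => by simp [bigX]
  have hcalc : (0 : ℚ) = ∑ i : Fin (d + 2), (-1 : ℚ) ^ (i : ℕ) *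
      (PM (Fin.snoc (fun t => h (i.succAbove t)) x₀)).det := by
    calc (0 : ℚ) = (bigX H).det := (det_bigX H).symm
      _ = ∑ r : Fin (d + 3), (-1 : ℚ) ^ (r : ℕ) * bigX H r 0 *
            ((bigX H).submatrix r.succAbove Fin.succ).det := Matrix.det_succ_column_zero _
      _ = ∑ r : Fin (d + 3), (-1 : ℚ) ^ (r : ℕ) *
            (PM (fun x => H (r.succAbove x))).det := by
          refine Finset.sum_congr rfl fun r _ => ?_
          rw [hcol, bigX_submatrix, mul_one]
      _ = (∑ i : Fin (d + 2), (-1 : ℚ) ^ ((i.castSucc : Fin (d + 3)) : ℕ) *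
            (PM (fun x => H ((Fin.castSucc i).succAbove x))).det)
          + (-1 : ℚ) ^ ((Fin.last (d + 2) : Fin (d + 3)) : ℕ) *
            (PM (fun x => H ((Fin.last (d + 2)).succAbove x))).det := by
          rw [Fin.sum_univ_castSucc]
      _ = ∑ i : Fin (d + 2), (-1 : ℚ) ^ (i : ℕ) *
            (PM (Fin.snoc (fun t => h (i.succAbove t)) x₀)).det := by
          rw [h2, det_PM_eq_zero hni, mul_zero, add_zero]
          refine Finset.sum_congr rfl fun i _ => ?_
          rw [h1, Fin.coe_castSucc]
  exact hcalc.symm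

/-! ### The cocycle on chains -/

lemma Phi_of_aux {d : ℕ} (g : SimpTup (d + 2) (d + 1)) : True := trivial

noncomputable def Phi (d : ℕ) : Chains (d + 2) (d + 1) →+ ℚ :=
  FreeAbelianGroup.lift fun g : SimpTup (d + 2) (d + 1) =>
    (PM (Fin.snoc (fun t => splitIdx (g.1 t)) (Fin.last (d + 1)))).det

lemma Phi_of {d : ℕ} (g : SimpTup (d + 2) (d + 1)) :
    Phi d (FreeAbelianGroup.of g)
      = (PM (Fin.snoc (fun t => splitIdx (g.1 t)) (Fin.last (d + 1)))).det := by
  rw [Phi, FreeAbelianGroup.lift_apply_of]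

lemma kappa_not_inj {d : ℕ} (w : SimpTup (d + 2) (d + 2)) :
    ¬ Function.Injective (fun r => splitIdx (w.1 r)) := by
  intro hinj
  have hsurj : Function.Surjective (fun r => splitIdx (w.1 r)) :=
    Finite.surjective_of_injective hinj
  choose r hr using hsurj
  set S : Fin (d + 2) → Finset (Fin (d + 2)) := fun k => Sset (w.1 (r k)) with hS
  have hstruct : ∀ k, w.1 (r k) = vtx k (S k) ∧ k ∉ S k ∧ (S k).Nonempty := by
    intro k
    have hrk : splitIdx (w.1 (r k)) = k := hr k
    have h := eq_vtx (w.2.1 (r k))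
    rw [hrk] at h
    exact h
  have huniv : (Finset.univ : Finset (Fin (d + 2))) = ∅ := by
    refine key_lemma (Finset.univ : Finset (Fin (d + 2))).card Finset.univ S le_rfl ?_ ?_ ?_ ?_
    · exact fun k _ => (hstruct k).2.2
    · exact fun k _ => (hstruct k).2.1
    · exact fun k _ => Finset.subset_univ _
    · intro k _ l _ hkl
      have hc : Compat (vtx k (S k)) (vtx l (S l)) := by
        rw [← (hstruct k).1, ← (hstruct l).1]; exact w.2.2 (r k) (r l)
      exact compat_vtx hkl hc
  simpa using Finset.eq_empty_iff_forall_notMem.1 huniv (0 : Fin (d + 2))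

lemma Phi_bd {d : ℕ} (w : SimpTup (d + 2) (d + 2)) :
    Phi d (bd (d + 2) (d + 1) (FreeAbelianGroup.of w)) = 0 := by
  have hlift : bd (d + 2) (d + 1) (FreeAbelianGroup.of w)
      = ∑ i : Fin (d + 2), ((-1 : ℤ) ^ (i : ℕ)) •
          FreeAbelianGroup.of
            (⟨w.1 ∘ Fin.succAbove i, fun j => w.2.1 _, fun j k => w.2.2 _ _⟩
              : SimpTup (d + 2) (d + 1)) := by
    rw [bd, FreeAbelianGroup.lift_apply_of]; rfl
  rw [hlift]; refine (map_sum (Phi d) _ _).trans ?_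
  have hterm : ∀ i : Fin (d + 2),
      Phi d (((-1 : ℤ) ^ (i : ℕ)) • FreeAbelianGroup.of
          (⟨w.1 ∘ Fin.succAbove i, fun j => w.2.1 _, fun j k => w.2.2 _ _⟩
            : SimpTup (d + 2) (d + 1)))
        = (-1 : ℚ) ^ (i : ℕ) *
            (PM (Fin.snoc (fun t => (fun x => splitIdx (w.1 x)) (i.succAbove t))
              (Fin.last (d + 1)))).det := by
    intro i
    refine (map_zsmul (Phi d) _ _).trans ?_
    refine (congrArg _ (Phi_of _)).trans ?_
    refine (zsmul_eq_mul _ _).trans ?_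
    push_cast
    rfl
  rw [Finset.sum_congr rfl fun i _ => hterm i]
  exact sum_faces (fun x => splitIdx (w.1 x)) (kappa_not_inj w) (Fin.last (d + 1))

/-! ### The spherical cycle -/

section Zside

variable {d : ℕ}

open Equiv Finset

def Kf (π : Equiv.Perm (Fin (d + 2))) (t : Fin (d + 1)) : Finset (Fin (d + 2)) :=
  (Finset.Iic t.castSucc).image π

lemma Kf_nonempty (π : Equiv.Perm (Fin (d + 2))) (t : Fin (d + 1)) : (Kf π t).Nonempty :=
  ⟨π t.castSucc, Finset.mem_image_of_mem _ (Finset.mem_Iic.2 le_rfl)⟩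

lemma Kf_mono (π : Equiv.Perm (Fin (d + 2))) {s t : Fin (d + 1)} (h : s ≤ t) :
    Kf π s ⊆ Kf π t :=
  Finset.image_subset_image (Finset.Iic_subset_Iic.2 (by
    rw [Fin.le_def] at h ⊢; simpa using h))

lemma Kf_card (π : Equiv.Perm (Fin (d + 2))) (t : Fin (d + 1)) : (Kf π t).card ≤ d + 1 := by
  refine (Finset.card_image_le).trans ?_
  have hsub : Finset.Iic t.castSucc ⊆ Finset.univ.erase (Fin.last (d + 1)) := by
    intro x hx
    exact Finset.mem_erase.2
      ⟨((Finset.mem_Iic.1 hx).trans_lt (Fin.castSucc_lt_last t)).ne, Finset.mem_univ _⟩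
  refine (Finset.card_le_card hsub).trans ?_
  rw [Finset.card_erase_of_mem (Finset.mem_univ _), Finset.card_univ, Fintype.card_fin]
  omega

lemma Kf_compl_nonempty (π : Equiv.Perm (Fin (d + 2))) (t : Fin (d + 1)) :
    ((Kf π t)ᶜ).Nonempty := by
  rw [← Finset.card_pos, Finset.card_compl, Fintype.card_fin]
  have := Kf_card π t
  omega

noncomputable def mx (π : Equiv.Perm (Fin (d + 2))) (t : Fin (d + 1)) : Fin (d + 2) :=
  (Kf π t).max' (Kf_nonempty π t)

lemma mx_mem (π : Equiv.Perm (Fin (d + 2))) (t : Fin (d + 1)) : mx π t ∈ Kf π t :=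
  Finset.max'_mem _ _

lemma mx_mono (π : Equiv.Perm (Fin (d + 2))) {s t : Fin (d + 1)} (h : s ≤ t) :
    mx π s ≤ mx π t :=
  Finset.max'_subset _ (Kf_mono π h)

noncomputable def Vf (π : Equiv.Perm (Fin (d + 2))) (t : Fin (d + 1)) :
    Finset (Fin (d + 2) × Bool) :=
  vtx (mx π t) ((Kf π t)ᶜ)

lemma Vf_asc (π : Equiv.Perm (Fin (d + 2))) (t : Fin (d + 1)) : IsAscSIE (Vf π t) :=
  vtx_isAscSIE (fun h => (Finset.mem_compl.1 h) (mx_mem π t)) (Kf_compl_nonempty π t)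

lemma splitIdx_Vf (π : Equiv.Perm (Fin (d + 2))) (t : Fin (d + 1)) :
    splitIdx (Vf π t) = mx π t :=
  splitIdx_vtx (fun h => (Finset.mem_compl.1 h) (mx_mem π t)) (Kf_compl_nonempty π t)

lemma Vf_subset (π : Equiv.Perm (Fin (d + 2))) {s t : Fin (d + 1)} (h : s ≤ t) :
    Vf π t ⊆ Vf π s := by
  refine vtx_subset (Finset.compl_subset_compl.2 (Kf_mono π h)) ?_
  by_cases hm : mx π t ∈ Kf π s
  · exact Or.inl (le_antisymm (Finset.le_max' _ _ hm) (mx_mono π h))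
  · exact Or.inr (Finset.mem_compl.2 hm)

lemma Vf_compat (π : Equiv.Perm (Fin (d + 2))) (t t' : Fin (d + 1)) :
    Compat (Vf π t) (Vf π t') := by
  rcases le_total t t' with h | h
  · exact Or.inr (Or.inl (Vf_subset π h))
  · exact Or.inl (Vf_subset π h)

noncomputable def tup (π : Equiv.Perm (Fin (d + 2))) : SimpTup (d + 2) (d + 1) :=
  ⟨fun t => Vf π t, fun t => Vf_asc π t, fun t t' => Vf_compat π t t'⟩

noncomputable def zc (d : ℕ) : Chains (d + 2) (d + 1) :=
  ∑ π : Equiv.Perm (Fin (d + 2)),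
    ((Equiv.Perm.sign π : ℤˣ) : ℤ) • FreeAbelianGroup.of (tup π)

lemma max'_congr {α : Type*} [LinearOrder α] {s t : Finset α} (h : s = t)
    (hs : s.Nonempty) (ht : t.Nonempty) : s.max' hs = t.max' ht := by
  subst h; rfl

lemma Kf_mul_swap (π : Equiv.Perm (Fin (d + 2))) (i : Fin (d + 1)) {s : Fin (d + 1)}
    (hs : s ≠ i) :
    Kf (π * Equiv.swap i.castSucc i.succ) s = Kf π s := by
  rcases lt_or_gt_of_ne hs with hlt | hgt
  · refine Finset.image_congr fun x hx => ?_
    have hx' : x ≤ s.castSucc := Finset.mem_Iic.1 (Finset.mem_coe.1 hx)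
    have hv : (x : ℕ) ≤ (s : ℕ) := by simpa [Fin.le_def] using hx'
    have hsi : (s : ℕ) < (i : ℕ) := hlt
    have h1 : x ≠ i.castSucc := by
      intro h; rw [h] at hv; simp at hv; omega
    have h2 : x ≠ i.succ := by
      intro h; rw [h] at hv; simp at hv; omega
    show (π * Equiv.swap i.castSucc i.succ) x = π x
    rw [Equiv.Perm.mul_apply, Equiv.swap_apply_of_ne_of_ne h1 h2]
  · have hsi : (i : ℕ) < (s : ℕ) := hgt
    have himg : (Finset.Iic s.castSucc).image (Equiv.swap i.castSucc i.succ)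
        = Finset.Iic s.castSucc := by
      refine Finset.eq_of_subset_of_card_le ?_ ?_
      · intro y hy
        obtain ⟨x, hx, rfl⟩ := Finset.mem_image.1 hy
        have hx' := Finset.mem_Iic.1 hx
        rcases eq_or_ne x i.castSucc with rfl | h1
        · rw [Equiv.swap_apply_left]
          refine Finset.mem_Iic.2 ?_
          rw [Fin.le_def]
          simp
          omega
        · rcases eq_or_ne x i.succ with rfl | h2
          · rw [Equiv.swap_apply_right]
            refine Finset.mem_Iic.2 ?_
            rw [Fin.le_def]
            simp
            omega
          · rw [Equiv.swap_apply_of_ne_of_ne h1 h2]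
            exact hx
      · rw [Finset.card_image_of_injective _ (Equiv.injective _)]
    calc Kf (π * Equiv.swap i.castSucc i.succ) s
        = (Finset.Iic s.castSucc).image (⇑π ∘ ⇑(Equiv.swap i.castSucc i.succ)) := by
          rw [Kf, Equiv.Perm.coe_mul]
      _ = ((Finset.Iic s.castSucc).image ⇑(Equiv.swap i.castSucc i.succ)).image ⇑π :=
          (Finset.image_image).symm
      _ = (Finset.Iic s.castSucc).image ⇑π := by rw [himg]
      _ = Kf π s := rfl

lemma Vf_mul_swap (π : Equiv.Perm (Fin (d + 2))) (i : Fin (d + 1)) {s : Fin (d + 1)}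
    (hs : s ≠ i) :
    Vf (π * Equiv.swap i.castSucc i.succ) s = Vf π s := by
  have hK := Kf_mul_swap π i hs
  rw [Vf, Vf, mx, mx, max'_congr hK (Kf_nonempty _ _) (Kf_nonempty _ _), hK]

/-- Faces of the simplices of the cycle. -/
noncomputable def face (i : Fin (d + 1)) (π : Equiv.Perm (Fin (d + 2))) :
    SimpTup (d + 2) d :=
  ⟨(tup π).1 ∘ Fin.succAbove i, fun j => (tup π).2.1 _, fun j k => (tup π).2.2 _ _⟩

lemma face_mul_swap (π : Equiv.Perm (Fin (d + 2))) (i : Fin (d + 1)) :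
    face i (π * Equiv.swap i.castSucc i.succ) = face i π :=
  Subtype.ext (funext fun t => Vf_mul_swap π i (Fin.succAbove_ne i t))

lemma bd_tup (π : Equiv.Perm (Fin (d + 2))) :
    bd (d + 2) d (FreeAbelianGroup.of (tup π))
      = ∑ i : Fin (d + 1), ((-1 : ℤ) ^ (i : ℕ)) • FreeAbelianGroup.of (face i π) := by
  rw [bd, FreeAbelianGroup.lift_apply_of]
  rfl

lemma bd_zc : bd (d + 2) d (zc d) = 0 := by
  rw [zc, map_sum]
  have hterm : ∀ π : Equiv.Perm (Fin (d + 2)),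
      bd (d + 2) d (((Equiv.Perm.sign π : ℤˣ) : ℤ) • FreeAbelianGroup.of (tup π))
        = ∑ i : Fin (d + 1), ((Equiv.Perm.sign π : ℤˣ) : ℤ) •
            (((-1 : ℤ) ^ (i : ℕ)) • FreeAbelianGroup.of (face i π)) := by
    intro π
    rw [map_zsmul, bd_tup, Finset.smul_sum]
  rw [Finset.sum_congr rfl fun π _ => hterm π, Finset.sum_comm]
  refine Finset.sum_eq_zero fun i _ => ?_
  refine Finset.sum_ninvolution (fun π => π * Equiv.swap i.castSucc i.succ) ?_ ?_
    (fun _ => Finset.mem_univ _) ?_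
  · intro π
    rw [face_mul_swap]
    have hsign : ((Equiv.Perm.sign (π * Equiv.swap i.castSucc i.succ) : ℤˣ) : ℤ)
        = -((Equiv.Perm.sign π : ℤˣ) : ℤ) := by
      rw [map_mul, Equiv.Perm.sign_swap (Fin.castSucc_lt_succ (i := i)).ne]
      simp
    rw [hsign, neg_smul]
    exact add_neg_cancel _
  · intro π _
    intro h
    have hτ : Equiv.swap i.castSucc i.succ = 1 := mul_left_cancel (by rw [mul_one]; exact h)
    have := congrArg (fun σ : Equiv.Perm (Fin (d + 2)) => σ i.castSucc) hτ
    simp [Equiv.swap_apply_left] at this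
    exact (Fin.castSucc_lt_succ (i := i)).ne this.symm
  · intro π
    show (π * Equiv.swap i.castSucc i.succ) * Equiv.swap i.castSucc i.succ = π
    rw [mul_assoc, Equiv.swap_mul_self, mul_one]

/-- Rigidity: if the snoc'd maxima function is injective then `π` is the identity. -/
lemma perm_eq_one_of_inj (π : Equiv.Perm (Fin (d + 2)))
    (hinj : Function.Injective
      (Fin.snoc (fun t => mx π t) (Fin.last (d + 1)) : Fin (d + 2) → Fin (d + 2))) :
    π = 1 := by
  have hne : ∀ t : Fin (d + 1), mx π t ≠ Fin.last (d + 1) := by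
    intro t h
    have hc : (t.castSucc : Fin (d + 2)) = Fin.last (d + 1) := hinj (by
      rw [Fin.snoc_castSucc, Fin.snoc_last, h])
    exact (Fin.castSucc_lt_last t).ne hc
  have hmxinj : ∀ {s t : Fin (d + 1)}, mx π s = mx π t → s = t := by
    intro s t h
    have hc := hinj (a₁ := s.castSucc) (a₂ := t.castSucc)
      (by rw [Fin.snoc_castSucc, Fin.snoc_castSucc]; exact h)
    exact Fin.castSucc_injective _ hc
  have hsm : ∀ {s t : Fin (d + 1)}, s < t → mx π s < mx π t := by
    intro s t h
    exact lt_of_le_of_ne (mx_mono π h.le) (fun e => h.ne (hmxinj e))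
  have hlow : ∀ t : Fin (d + 1), (t : ℕ) ≤ (mx π t : ℕ) := by
    intro t
    induction t using Fin.induction with
    | zero => exact Nat.zero_le _
    | succ i ih =>
      have h2 : (mx π i.castSucc : ℕ) < (mx π i.succ : ℕ) := hsm (Fin.castSucc_lt_succ (i := i))
      simp only [Fin.coe_castSucc] at ih
      simp only [Fin.val_succ]
      omega
  have hup : ∀ t : Fin (d + 1), (mx π t : ℕ) ≤ (t : ℕ) := by
    intro t
    induction t using Fin.reverseInduction with
    | last =>
      have h := hne (Fin.last d)
      have hlt := (mx π (Fin.last d)).isLt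
      have hvne : (mx π (Fin.last d) : ℕ) ≠ d + 1 := by
        intro hv
        exact h (Fin.ext (by simpa using hv))
      simp only [Fin.val_last]
      omega
    | cast i ih =>
      have h2 : (mx π i.castSucc : ℕ) < (mx π i.succ : ℕ) := hsm (Fin.castSucc_lt_succ (i := i))
      simp only [Fin.val_succ] at ih
      simp only [Fin.coe_castSucc]
      omega
  have hmx : ∀ t : Fin (d + 1), mx π t = t.castSucc := by
    intro t
    apply Fin.ext
    have := le_antisymm (hup t) (hlow t)
    simpa using this
  have hfix : ∀ v : ℕ, ∀ t : Fin (d + 1), (t : ℕ) = v → π t.castSucc = t.castSucc := by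
    intro v
    induction v using Nat.strong_induction_on with
    | _ v ih =>
      intro t ht
      have hmem : t.castSucc ∈ Kf π t := by rw [← hmx t]; exact mx_mem π t
      obtain ⟨x, hx, hπx⟩ := Finset.mem_image.1 hmem
      have hxle : (x : ℕ) ≤ (t : ℕ) := by
        simpa [Fin.le_def] using Finset.mem_Iic.1 hx
      have hxlt : (x : ℕ) < d + 1 := lt_of_le_of_lt hxle t.isLt
      set s : Fin (d + 1) := ⟨(x : ℕ), hxlt⟩ with hsdef
      have hxs : x = s.castSucc := Fin.ext rfl
      rcases lt_or_eq_of_le hxle with hlt | heq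
      · exfalso
        have hsx : (s : ℕ) = (x : ℕ) := rfl
        have hps : π s.castSucc = s.castSucc := ih (s : ℕ) (by omega) s rfl
        rw [hxs, hps] at hπx
        have hst : (s : ℕ) = (t : ℕ) := by
          have := congrArg Fin.val hπx
          simpa using this
        omega
      · have hxt : x = t.castSucc := Fin.ext (by simpa using heq)
        rw [hxt] at hπx
        exact hπx
  have hlast : π (Fin.last (d + 1)) = Fin.last (d + 1) := by
    by_contra hne'
    have hvne : (π (Fin.last (d + 1)) : ℕ) ≠ d + 1 := by
      intro hv
      exact hne' (Fin.ext (by simpa using hv))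
    have hlt : (π (Fin.last (d + 1)) : ℕ) < d + 1 := by
      have := (π (Fin.last (d + 1))).isLt
      omega
    set s : Fin (d + 1) := ⟨(π (Fin.last (d + 1)) : ℕ), hlt⟩ with hsdef
    have h1 : π (Fin.last (d + 1)) = s.castSucc := Fin.ext rfl
    have h2 := hfix (s : ℕ) s rfl
    have h3 := π.injective (h1.trans h2.symm)
    exact (Fin.castSucc_lt_last s).ne h3.symm
  apply Equiv.ext
  intro x
  refine Fin.lastCases ?_ (fun t => ?_) x
  · simpa using hlast
  · simpa using hfix (t : ℕ) t rfl

lemma mx_one (t : Fin (d + 1)) : mx (1 : Equiv.Perm (Fin (d + 2))) t = t.castSucc := by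
  have hK : Kf (1 : Equiv.Perm (Fin (d + 2))) t = Finset.Iic t.castSucc := by
    rw [Kf]
    simp
  rw [mx]
  refine le_antisymm ?_ ?_
  · exact Finset.max'_le _ _ _ (fun y hy => Finset.mem_Iic.1 (hK ▸ hy))
  · exact Finset.le_max' _ _ (hK ▸ Finset.mem_Iic.2 le_rfl)

lemma Phi_zc : Phi d (zc d) = 1 := by
  rw [zc, map_sum]
  have hterm : ∀ π : Equiv.Perm (Fin (d + 2)),
      Phi d (((Equiv.Perm.sign π : ℤˣ) : ℤ) • FreeAbelianGroup.of (tup π))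
        = ((Equiv.Perm.sign π : ℤˣ) : ℤ) •
            (PM (Fin.snoc (fun t => mx π t) (Fin.last (d + 1)))).det := by
    intro π
    rw [map_zsmul, Phi_of]
    have harg : (fun t => splitIdx ((tup π).1 t)) = fun t => mx π t :=
      funext fun t => splitIdx_Vf π t
    rw [harg]
  rw [Finset.sum_congr rfl fun π _ => hterm π]
  rw [Finset.sum_eq_single (1 : Equiv.Perm (Fin (d + 2)))]
  · have hPM1 : PM (Fin.snoc (fun t => mx (1 : Equiv.Perm (Fin (d + 2))) t)
        (Fin.last (d + 1))) = (1 : Matrix (Fin (d + 2)) (Fin (d + 2)) ℚ) := by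
      have hid : ∀ r : Fin (d + 2),
          (Fin.snoc (fun t => mx (1 : Equiv.Perm (Fin (d + 2))) t) (Fin.last (d + 1))
            : Fin (d + 2) → Fin (d + 2)) r = r := by
        intro r
        refine Fin.lastCases ?_ (fun t => ?_) r
        · rw [Fin.snoc_last]
        · rw [Fin.snoc_castSucc, mx_one]
      ext r c
      rw [PM]
      simp [hid r, Matrix.one_apply]
    rw [hPM1, Matrix.det_one]
    simp
  · intro π _ hπ
    have hdet : (PM (Fin.snoc (fun t => mx π t) (Fin.last (d + 1)))).det = 0 := by
      by_cases hinj : Function.Injective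
        (Fin.snoc (fun t => mx π t) (Fin.last (d + 1)) : Fin (d + 2) → Fin (d + 2))
      · exact absurd (perm_eq_one_of_inj π hinj) hπ
      · exact det_PM_eq_zero hinj
    rw [hdet, smul_zero]
  · intro h
    exact absurd (Finset.mem_univ _) h

end Zside

lemma Phi_bd_all {d : ℕ} (x : Chains (d + 2) (d + 2)) :
    Phi d (bd (d + 2) (d + 1) x) = 0 := by
  refine FreeAbelianGroup.induction_on x ?_ ?_ ?_ ?_
  · simp
  · exact fun w => Phi_bd w
  · intro w hw
    rw [map_neg, map_neg, hw, neg_zero]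
  · intro a b ha hb
    rw [map_add, map_add, ha, hb, add_zero]

end SIEProof

/-- The complex `I_n^↑(pos)` of ascending symmetric ideal edges is not `(n-2)`-acyclic:
its reduced homology in degree `n - 2` is nonzero, i.e. there is a cycle of degree `n - 2`
(a chain on tuples of length `n - 2 + 1`) which is not a boundary. -/
theorem stmt11 (n : ℕ) (hn : 2 ≤ n) :
    ∃ z : Chains n (n - 2 + 1),
      bd n (n - 2) z = 0 ∧ z ∉ Set.range (bd n (n - 2 + 1)) := by
  obtain ⟨d, rfl⟩ : ∃ d, n = d + 2 := ⟨n - 2, by omega⟩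
  refine ⟨SIEProof.zc d, SIEProof.bd_zc, ?_⟩
  rintro ⟨w, hw⟩
  have hphi : SIEProof.Phi d (SIEProof.zc d) = 0 := by
    rw [← hw]
    exact SIEProof.Phi_bd_all w
  rw [SIEProof.Phi_zc] at hphi
  exact one_ne_zero hphi
end

section
/- With the hypotheses of the two-variable Morse Lemma, if additionally every 0-cell v with s ≤ h(v) < t satisfies H̃_{m+1}(lk^↑ v) = 0, then the inclusion Y_{h≥t} → Y_{h≥s} induces an injection on reduced homology H̃_{m+1}. -/
/-- A set of finite sets is a simplicial complex if it is downward closed. -/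
def IsCpx {V : Type*} (K : Set (Finset V)) : Prop :=
  ∀ s ∈ K, ∀ t : Finset V, t ⊆ s → t ∈ K

/-- Geometric realization of an abstract simplicial complex. -/
abbrev Realization {V : Type*} (K : Set (Finset V)) : Type _ :=
  {g : V → ℝ // (∀ x, 0 ≤ g x) ∧ (Function.support g).Finite ∧ (∑ᶠ x, g x) = 1 ∧
    ∀ s : Finset V, (∀ x ∈ s, g x ≠ 0) → s ∈ K}

/-- `m`-connectedness (for `m : ℤ`, so `(-1)`-connected means nonempty). -/
def IsConnTop (X : Type*) [TopologicalSpace X] (m : ℤ) : Prop :=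
  (-1 ≤ m → Nonempty X) ∧
  ∀ k : ℕ, (k : ℤ) ≤ m → ∀ x : X, Subsingleton (HomotopyGroup (Fin k) X x)

/-- The lexicographic order on `(h, f)`-values of vertices. -/
def lexLt {V : Type*} (h f : V → ℝ) (v w : V) : Prop :=
  h v < h w ∨ (h v = h w ∧ f v < f w)

/-- The ascending link of a vertex with respect to the Morse function `(h, f)`. -/
def AscLk {V : Type*} [DecidableEq V] (K : Set (Finset V)) (h f : V → ℝ) (v : V) :
    Set (Finset V) :=
  {s | v ∉ s ∧ insert v s ∈ K ∧ ∀ w ∈ s, lexLt h f v w}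

/-- The full subcomplex `Y_{h ≥ s}` spanned by vertices of height at least `s`. -/
def SubLevel {V : Type*} (K : Set (Finset V)) (h : V → ℝ) (s : EReal) :
    Set (Finset V) :=
  {σ | σ ∈ K ∧ ∀ v ∈ σ, s ≤ (h v : EReal)}

/-- Ordered tuples (with repetitions) of vertices spanning a simplex of `K`; degree-`d`
generators of the augmented ordered chain complex of `K` (which computes reduced
homology). -/
def TupK {V : Type*} (K : Set (Finset V)) (d : ℕ) : Type _ :=
  {f : Fin d → V // ∀ s : Finset V, (∀ x ∈ s, x ∈ Set.range f) → s ∈ K}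

/-- Augmented ordered simplicial chains of `K`. -/
abbrev ChainsK {V : Type*} (K : Set (Finset V)) (d : ℕ) : Type _ :=
  FreeAbelianGroup (TupK K d)

/-- The simplicial boundary map. -/
noncomputable def bdK {V : Type*} (K : Set (Finset V)) (d : ℕ) :
    ChainsK K (d + 1) →+ ChainsK K d :=
  FreeAbelianGroup.lift fun f =>
    ∑ i : Fin (d + 1), ((-1 : ℤ) ^ (i : ℕ)) •
      FreeAbelianGroup.of
        (⟨f.1 ∘ Fin.succAbove i, fun s hs => f.2 s fun x hx => by
            obtain ⟨j, hj⟩ := hs x hx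
            exact ⟨Fin.succAbove i j, hj⟩⟩ : TupK K d)

/-- The chain map induced by an inclusion of complexes. -/
noncomputable def chainIncl {V : Type*} {K K' : Set (Finset V)} (hKK' : K ⊆ K')
    (d : ℕ) : ChainsK K d →+ ChainsK K' d :=
  FreeAbelianGroup.map fun g => ⟨g.1, fun s hs => hKK' (g.2 s hs)⟩


namespace M14


open FreeAbelianGroup

variable {α β : Type*}

lemma toFinsupp_injective : Function.Injective (FreeAbelianGroup.toFinsupp (X := α)) :=
  fun a b h => by
    rw [← Finsupp.toFreeAbelianGroup_toFinsupp a, h, Finsupp.toFreeAbelianGroup_toFinsupp]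

lemma toFinsupp_map (f : α → β) (y : FreeAbelianGroup α) :
    (FreeAbelianGroup.map f y).toFinsupp = Finsupp.mapDomain f y.toFinsupp := by
  have h := FreeAbelianGroup.lift_ext
    (FreeAbelianGroup.toFinsupp.comp (FreeAbelianGroup.map f))
    ((Finsupp.mapDomain.addMonoidHom f).comp FreeAbelianGroup.toFinsupp)
    (fun x => by
      simp [FreeAbelianGroup.map_of_apply, FreeAbelianGroup.toFinsupp_of,
        Finsupp.mapDomain.addMonoidHom_apply, Finsupp.mapDomain_single])
  exact DFunLike.congr_fun h y

lemma support_add' [DecidableEq α] (a b : FreeAbelianGroup α) :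
    (a + b).support ⊆ a.support ∪ b.support := by
  simp only [FreeAbelianGroup.support, map_add]
  exact Finsupp.support_add

lemma support_finset_sum {γ : Type*} [DecidableEq α] [DecidableEq γ] (s : Finset γ) (g : γ → FreeAbelianGroup α) :
    (∑ a ∈ s, g a).support ⊆ s.biUnion fun a => (g a).support := by
  induction s using Finset.cons_induction with
  | empty => simp [FreeAbelianGroup.support_zero]
  | cons a s ha ih =>
    rw [Finset.sum_cons, Finset.cons_eq_insert, Finset.biUnion_insert]
    exact (support_add' _ _).trans (Finset.union_subset_union le_rfl ih)

lemma support_zsmul_subset (n : ℤ) (x : FreeAbelianGroup α) :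
    (n • x).support ⊆ x.support := by
  rcases eq_or_ne n 0 with rfl | hn
  · simp [FreeAbelianGroup.support_zero]
  · rw [FreeAbelianGroup.support_zsmul n hn]

lemma lift_eq_sum (φ : α → FreeAbelianGroup β) (w : FreeAbelianGroup α) :
    FreeAbelianGroup.lift φ w = w.toFinsupp.sum fun a n => n • φ a := by
  conv_lhs => rw [← Finsupp.toFreeAbelianGroup_toFinsupp w]
  rw [Finsupp.toFreeAbelianGroup, Finsupp.liftAddHom_apply, Finsupp.sum, map_sum, Finsupp.sum]
  simp [FreeAbelianGroup.lift_apply_of]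

lemma support_lift [DecidableEq α] [DecidableEq β] (φ : α → FreeAbelianGroup β) (w : FreeAbelianGroup α) :
    (FreeAbelianGroup.lift φ w).support ⊆ w.support.biUnion fun a => (φ a).support := by
  rw [lift_eq_sum, Finsupp.sum]
  exact (support_finset_sum _ _).trans
    (Finset.biUnion_mono fun a _ => support_zsmul_subset _ _)





variable {V : Type}

/-- Free chains on all tuples. -/
abbrev FC (V : Type) (d : ℕ) : Type := FreeAbelianGroup (Fin d → V)

noncomputable def bdF (V : Type) (d : ℕ) : FC V (d + 1) →+ FC V d :=
  FreeAbelianGroup.lift fun x => ∑ i : Fin (d + 1), ((-1 : ℤ) ^ (i : ℕ)) •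
    FreeAbelianGroup.of (x ∘ Fin.succAbove i)

lemma bdF_of (d : ℕ) (x : Fin (d + 1) → V) :
    bdF V d (FreeAbelianGroup.of x) = ∑ i : Fin (d + 1), ((-1 : ℤ) ^ (i : ℕ)) •
      FreeAbelianGroup.of (x ∘ Fin.succAbove i) :=
  FreeAbelianGroup.lift_apply_of _ _

lemma succAbove_swap {d : ℕ} (i : Fin (d + 2)) (j : Fin (d + 1)) (hij : (j : ℕ) < (i : ℕ))
    (k : Fin d) :
    i.succAbove (j.succAbove k) =
      (j.castSucc).succAbove ((i.pred (by rintro rfl; exact Nat.not_lt_zero _ hij)).succAbove k) := by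
  apply Fin.ext
  simp only [Fin.succAbove, Fin.lt_def, Fin.coe_castSucc, Fin.val_succ, Fin.coe_pred]
  split_ifs <;> simp_all <;> omega

lemma bdF_bdF (d : ℕ) (w : FC V (d + 2)) : bdF V d (bdF V (d + 1) w) = 0 := by
  have : (bdF V d).comp (bdF V (d + 1)) = 0 := by
    apply FreeAbelianGroup.lift_ext
    intro x
    simp only [AddMonoidHom.comp_apply, AddMonoidHom.zero_apply, bdF_of, map_sum,
      AddMonoidHom.map_zsmul, bdF_of, Finset.smul_sum, smul_smul, ← pow_add]
    rw [← Finset.sum_product']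
    rw [Finset.univ_product_univ]
    let P := Fin (d + 2) × Fin (d + 1)
    let S : Finset P := Finset.univ.filter fun ij => (ij.2 : ℕ) < (ij.1 : ℕ)
    rw [← Finset.sum_add_sum_compl S, ← eq_neg_iff_add_eq_zero, ← Finset.sum_neg_distrib]
    apply Finset.sum_bij (fun (ij : P) (hij : ij ∈ S) =>
      ((ij.2.castSucc, ij.1.pred (by
        have h2 : (ij.2 : ℕ) < (ij.1 : ℕ) := (Finset.mem_filter.mp hij).2
        intro h0; rw [h0] at h2; simp at h2)) : P))
    · intro ij hij
      have h2 : (ij.2 : ℕ) < (ij.1 : ℕ) := (Finset.mem_filter.mp hij).2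
      simp only [S, Finset.compl_filter, Finset.mem_filter, Finset.mem_univ, true_and, not_lt,
        Fin.coe_pred, Fin.coe_castSucc]
      omega
    · rintro ⟨i, j⟩ hij ⟨i', j'⟩ hij' h
      have hA : (j : ℕ) < (i : ℕ) := (Finset.mem_filter.mp hij).2
      have hB : (j' : ℕ) < (i' : ℕ) := (Finset.mem_filter.mp hij').2
      have hj := congr_arg (fun p : P => ((p.1 : Fin (d + 2)) : ℕ)) h
      have hi := congr_arg (fun p : P => ((p.2 : Fin (d + 1)) : ℕ)) h
      simp at hj hi
      exact Prod.ext (Fin.ext (show (i : ℕ) = (i' : ℕ) by omega))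
        (Fin.ext (show (j : ℕ) = (j' : ℕ) by omega))
    · rintro ⟨i', j'⟩ hij'
      simp only [S, Finset.compl_filter, Finset.mem_filter, Finset.mem_univ, true_and,
        not_lt] at hij'
      refine ⟨(j'.succ, ⟨(i' : ℕ), by omega⟩), ?_, ?_⟩
      · simp only [S, Finset.mem_filter, Finset.mem_univ, true_and]
        simp; omega
      · ext <;> simp [Fin.ext_iff]
    · rintro ⟨i, j⟩ hij
      have h2 : (j : ℕ) < (i : ℕ) := (Finset.mem_filter.mp hij).2
      simp only
      rw [← neg_smul]
      congr 1
      · rw [Fin.coe_castSucc, Fin.coe_pred]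
        have : (i : ℕ) + (j : ℕ) = ((j : ℕ) + ((i : ℕ) - 1)) + 1 := by omega
        rw [this, pow_succ]
        ring
      · congr 1
        funext k
        simp only [Function.comp_apply]
        exact congrArg x (succAbove_swap i j h2 k)
  exact DFunLike.congr_fun this w



section Eps
variable {V : Type} [DecidableEq V]

/-- The tuple-spanning condition, as a predicate. -/
def Tup (K : Set (Finset V)) {d : ℕ} (x : Fin d → V) : Prop :=
  ∀ s : Finset V, (∀ a ∈ s, a ∈ Set.range x) → s ∈ K

noncomputable def eps (K : Set (Finset V)) (d : ℕ) : ChainsK K d →+ FC V d :=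
  FreeAbelianGroup.map (fun g : TupK K d => g.1)

lemma eps_of (K : Set (Finset V)) (d : ℕ) (g : TupK K d) :
    eps K d (FreeAbelianGroup.of g) = FreeAbelianGroup.of g.1 :=
  FreeAbelianGroup.map_of_apply g

lemma tupk_val_injective (K : Set (Finset V)) (d : ℕ) :
    Function.Injective (fun g : TupK K d => g.1) := fun a b h => Subtype.ext h

lemma eps_injective (K : Set (Finset V)) (d : ℕ) : Function.Injective (eps K d) := by
  intro a b h
  apply toFinsupp_injective
  apply Finsupp.mapDomain_injective (tupk_val_injective K d)
  rw [← toFinsupp_map, ← toFinsupp_map]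
  exact congrArg _ h

lemma support_eps_tup (K : Set (Finset V)) (d : ℕ) (y : ChainsK K d) :
    ∀ τ ∈ (eps K d y).support, Tup K τ := by
  intro τ hτ
  rw [FreeAbelianGroup.support] at hτ
  unfold eps at hτ
  rw [toFinsupp_map] at hτ
  have := Finsupp.mapDomain_support hτ
  rw [Finset.mem_image] at this
  obtain ⟨g, -, rfl⟩ := this
  exact g.2

lemma exists_eps_preimage (K : Set (Finset V)) (d : ℕ) (x : FC V d)
    (hx : ∀ τ ∈ x.support, Tup K τ) : ∃ y : ChainsK K d, eps K d y = x := by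
  have hsub : ↑x.toFinsupp.support ⊆ Set.range (fun g : TupK K d => g.1) := by
    intro τ hτ
    exact ⟨⟨τ, hx τ hτ⟩, rfl⟩
  refine ⟨Finsupp.toFreeAbelianGroup
    (Finsupp.comapDomain _ x.toFinsupp ((tupk_val_injective K d).injOn)), ?_⟩
  apply toFinsupp_injective
  unfold eps
  rw [toFinsupp_map, FreeAbelianGroup.toFinsupp_toFreeAbelianGroup,
    Finsupp.mapDomain_comapDomain _ (tupk_val_injective K d) _ hsub]

lemma eps_bdK (K : Set (Finset V)) (d : ℕ) (y : ChainsK K (d + 1)) :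
    eps K d (bdK K d y) = bdF V d (eps K (d + 1) y) := by
  have : (eps K d).comp (bdK K d) = (bdF V d).comp (eps K (d + 1)) := by
    apply FreeAbelianGroup.lift_ext
    intro g
    simp only [AddMonoidHom.comp_apply]
    rw [show bdK K d (FreeAbelianGroup.of g) = _ from FreeAbelianGroup.lift_apply_of _ _,
      eps_of, bdF_of]
    refine (map_sum _ _ _).trans ?_
    refine Finset.sum_congr rfl fun i _ => ?_
    exact (map_zsmul _ _ _).trans (congrArg _ (eps_of _ _ _))
  exact DFunLike.congr_fun this y

lemma eps_chainIncl {K K' : Set (Finset V)} (hKK' : K ⊆ K') (d : ℕ) (y : ChainsK K d) :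
    eps K' d (chainIncl hKK' d y) = eps K d y := by
  have : (eps K' d).comp (chainIncl hKK' d) = eps K d := by
    apply FreeAbelianGroup.lift_ext
    intro g
    simp only [AddMonoidHom.comp_apply]
    rw [show chainIncl hKK' d (FreeAbelianGroup.of g) = _ from
      FreeAbelianGroup.map_of_apply g]
    exact (eps_of _ _ _).trans (eps_of _ _ g).symm
  exact DFunLike.congr_fun this y

/-- the part of a chain supported on tuples satisfying `p` -/
noncomputable def part {d : ℕ} (p : (Fin d → V) → Prop) [DecidablePred p] (x : FC V d) : FC V d :=
  Finsupp.toFreeAbelianGroup (x.toFinsupp.filter p)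

lemma part_add_part_not {d : ℕ} (p : (Fin d → V) → Prop) [DecidablePred p] (x : FC V d) :
    part p x + part (fun τ => ¬ p τ) x = x := by
  rw [part, part, ← map_add, Finsupp.filter_pos_add_filter_neg,
    Finsupp.toFreeAbelianGroup_toFinsupp]

lemma support_part {d : ℕ} (p : (Fin d → V) → Prop) [DecidablePred p] (x : FC V d) :
    (part p x).support = x.support.filter p := by
  rw [FreeAbelianGroup.support, part, FreeAbelianGroup.toFinsupp_toFreeAbelianGroup,
    Finsupp.support_filter, FreeAbelianGroup.support]

end Eps

section Helpers
variable {V : Type} [DecidableEq V]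

omit [DecidableEq V] in
lemma support_sub' {α : Type} [DecidableEq α] (a b : FreeAbelianGroup α) :
    (a - b).support ⊆ a.support ∪ b.support := by
  rw [sub_eq_add_neg]
  exact (support_add' _ _).trans (by rw [FreeAbelianGroup.support_neg])

lemma support_bdF {d : ℕ} (x : FC V (d + 1)) :
    ∀ σ ∈ (bdF V d x).support, ∃ τ ∈ x.support, ∃ i : Fin (d + 1), σ = τ ∘ Fin.succAbove i := by
  intro σ hσ
  unfold bdF at hσ
  have h1 := support_lift _ x hσ
  rw [Finset.mem_biUnion] at h1
  obtain ⟨τ, hτ, hmem⟩ := h1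
  have h2 := support_finset_sum Finset.univ
    (fun i : Fin (d + 1) => ((-1 : ℤ) ^ (i : ℕ)) •
      FreeAbelianGroup.of (τ ∘ Fin.succAbove i)) hmem
  rw [Finset.mem_biUnion] at h2
  obtain ⟨i, -, hi⟩ := h2
  have h3 := support_zsmul_subset _ _ hi
  rw [FreeAbelianGroup.support_of, Finset.mem_singleton] at h3
  exact ⟨τ, hτ, i, h3⟩

/-- The set of vertices occurring in a chain. -/
noncomputable def Vset {d : ℕ} (x : FC V d) : Finset V :=
  x.support.biUnion fun τ => Finset.image τ Finset.univ

lemma mem_Vset {d : ℕ} {x : FC V d} {u : V} :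
    u ∈ Vset x ↔ ∃ τ ∈ x.support, u ∈ Set.range τ := by
  unfold Vset
  rw [Finset.mem_biUnion]
  constructor
  · rintro ⟨τ, hτ, hu⟩
    rw [Finset.mem_image] at hu
    obtain ⟨i, -, rfl⟩ := hu
    exact ⟨τ, hτ, i, rfl⟩
  · rintro ⟨τ, hτ, i, rfl⟩
    exact ⟨τ, hτ, Finset.mem_image.2 ⟨i, Finset.mem_univ i, rfl⟩⟩

end Helpers

section Weights
variable {V : Type} (h f : V → ℝ) (t εp : ℝ) (Frange : Finset ℝ)

/-- weight of a vertex, for the termination measure -/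
noncomputable def wt (u : V) : ℕ :=
  (Frange.card + 1) * ⌈(t - h u) / εp⌉₊ + (Frange.filter fun y => f u < y).card

lemma wt_lt_of_f {u v : V} (heq : h u = h v) (hf : f v < f u) (hfu : f u ∈ Frange) :
    wt h f t εp Frange u < wt h f t εp Frange v := by
  unfold wt
  rw [heq]
  refine Nat.add_lt_add_left (Finset.card_lt_card ⟨?_, ?_⟩) _
  · intro y hy
    rw [Finset.mem_filter] at hy ⊢
    exact ⟨hy.1, hf.trans hy.2⟩
  · intro hcon
    have h1 : f u ∈ Frange.filter fun y => f v < y := Finset.mem_filter.2 ⟨hfu, hf⟩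
    have h2 := hcon h1
    rw [Finset.mem_filter] at h2
    exact lt_irrefl _ h2.2
lemma wt_lt_of_step {u v : V} (hεp : 0 < εp) (hut : h u < t) (hstep : h v + εp ≤ h u) :
    wt h f t εp Frange u < wt h f t εp Frange v := by
  have hcc : ⌈(t - h u) / εp⌉₊ + 1 ≤ ⌈(t - h v) / εp⌉₊ := by
    have h0 : (0 : ℝ) ≤ (t - h u) / εp := div_nonneg (by linarith) hεp.le
    have h1 : (t - h u) / εp + 1 ≤ (t - h v) / εp := by
      have heq : (t - h u) / εp + 1 = (t - h u + εp) / εp := by field_simp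
      rw [heq]
      gcongr
      linarith
    calc ⌈(t - h u) / εp⌉₊ + 1 = ⌈(t - h u) / εp + 1⌉₊ := (Nat.ceil_add_one h0).symm
      _ ≤ ⌈(t - h v) / εp⌉₊ := Nat.ceil_le_ceil h1
  unfold wt
  set N := Frange.card
  have hr : (Frange.filter fun y => f u < y).card ≤ N := Finset.card_filter_le _ _
  calc (N + 1) * ⌈(t - h u) / εp⌉₊ + (Frange.filter fun y => f u < y).card
      < (N + 1) * (⌈(t - h u) / εp⌉₊ + 1) := by
        rw [Nat.mul_add, Nat.mul_one]; omega
    _ ≤ (N + 1) * ⌈(t - h v) / εp⌉₊ := Nat.mul_le_mul_left _ hcc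
    _ ≤ _ := Nat.le_add_right _ _

end Weights

section Main
variable {V : Type} [DecidableEq V]

lemma lex_decrease {W : ℕ} (c' c : Fin (W + 1) → ℕ) (ω : Fin (W + 1))
    (hlt : c' ω < c ω) (hle : ∀ k, ω < k → c' k ≤ c k) :
    Pi.Lex (fun a b : Fin (W + 1) => a > b) (fun {_} => ((· < ·) : ℕ → ℕ → Prop)) c' c := by
  classical
  let D : Finset (Fin (W + 1)) := Finset.univ.filter fun k => c' k ≠ c k
  have hωD : ω ∈ D := Finset.mem_filter.2 ⟨Finset.mem_univ _, hlt.ne⟩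
  have hD : D.Nonempty := ⟨ω, hωD⟩
  refine ⟨D.max' hD, ?_, ?_⟩
  · intro j hj
    by_contra hne
    exact absurd (D.le_max' j (Finset.mem_filter.2 ⟨Finset.mem_univ _, hne⟩)) (not_le.2 hj)
  · have hωi : ω ≤ D.max' hD := D.le_max' ω hωD
    rcases eq_or_lt_of_le hωi with heq | hlt2
    · exact heq ▸ hlt
    · have hne : c' (D.max' hD) ≠ c (D.max' hD) := (Finset.mem_filter.1 (D.max'_mem hD)).2
      exact lt_of_le_of_ne (hle _ hlt2) hne

lemma descend (K : Set (Finset V)) (hK : IsCpx K)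
    (h f : V → ℝ) (m : ℕ) (εp : ℝ) (hεp : 0 < εp)
    (hdisc : ∀ v w : V, ({v, w} : Finset V) ∈ K → v ≠ w → h v ≠ h w → εp ≤ |h v - h w|)
    (Frange : Finset ℝ) (hFr : ∀ u : V, f u ∈ Frange)
    (htie : ∀ v w : V, ({v, w} : Finset V) ∈ K → v ≠ w → h v = h w → f v ≠ f w)
    (t : ℝ) (s : EReal)
    (hlkH : ∀ v : V, s ≤ (h v : EReal) → h v < t →
      ∀ z : ChainsK (AscLk K h f v) (m + 1 + 1),
        bdK (AscLk K h f v) (m + 1) z = 0 →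
        z ∈ Set.range (bdK (AscLk K h f v) (m + 1 + 1)))
    (z : ChainsK (SubLevel K h (t : EReal)) (m + 1 + 1))
    (W : ℕ) :
    ∀ w : FC V (m + 1 + 1 + 1),
      (∀ τ ∈ w.support, Tup (SubLevel K h s) τ) →
      (∀ u ∈ (Vset w).filter (fun u => h u < t), wt h f t εp Frange u ≤ W) →
      bdF V (m + 1 + 1) w = eps (SubLevel K h (t : EReal)) (m + 1 + 1) z →
      ∃ y : ChainsK (SubLevel K h (t : EReal)) (m + 1 + 1 + 1),
        bdK (SubLevel K h (t : EReal)) (m + 1 + 1) y = z := by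
  classical
  haveI hsto : IsStrictTotalOrder (Fin (W + 1)) (fun a b : Fin (W + 1) => a > b) :=
    { trichotomous := fun a b h1 h2 => le_antisymm (not_lt.1 h1) (not_lt.1 h2)
      irrefl := fun a => lt_irrefl a
      trans := fun a b c hab hbc => lt_trans hbc hab }
  have wf0 : WellFounded (Pi.Lex (fun a b : Fin (W + 1) => a > b)
      (fun {_} => ((· < ·) : ℕ → ℕ → Prop))) :=
    Pi.Lex.wellFounded (fun a b : Fin (W + 1) => a > b)
      (s := fun _ => ((· < ·) : ℕ → ℕ → Prop)) (fun _ => wellFounded_lt)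
  set msr : FC V (m + 1 + 1 + 1) → (Fin (W + 1) → ℕ) := fun x k =>
    (((Vset x).filter fun u => h u < t).filter
      fun u => wt h f t εp Frange u = (k : ℕ)).card with hmsr
  intro w
  refine (InvImage.wf msr wf0).induction
    (C := fun w => (∀ τ ∈ FreeAbelianGroup.support w, Tup (SubLevel K h s) τ) →
      (∀ u ∈ (Vset w).filter (fun u => h u < t), wt h f t εp Frange u ≤ W) →
      bdF V (m + 1 + 1) w = eps (SubLevel K h (t : EReal)) (m + 1 + 1) z →
      ∃ y : ChainsK (SubLevel K h (t : EReal)) (m + 1 + 1 + 1),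
        bdK (SubLevel K h (t : EReal)) (m + 1 + 1) y = z) w ?_
  clear w
  intro w IH hTup hW hbd
  by_cases hB : ((Vset w).filter fun u => h u < t) = ∅
  · -- no bad vertices: w already lives in the sublevel-t complex
    have hTupT : ∀ τ ∈ w.support, Tup (SubLevel K h (t : EReal)) τ := by
      intro τ hτ s' hs'
      have h1 := hTup τ hτ s' hs'
      refine ⟨h1.1, fun u hu => ?_⟩
      have hu_mem : u ∈ Vset w := mem_Vset.2 ⟨τ, hτ, hs' u hu⟩
      have hnot : ¬ h u < t := by
        intro hlt
        have : u ∈ (Vset w).filter fun u => h u < t := Finset.mem_filter.2 ⟨hu_mem, hlt⟩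
        rw [hB] at this
        exact absurd this (Finset.notMem_empty u)
      exact EReal.coe_le_coe_iff.2 (not_lt.1 hnot)
    obtain ⟨y, hy⟩ := exists_eps_preimage _ _ w hTupT
    refine ⟨y, eps_injective _ _ ?_⟩
    rw [eps_bdK, hy, hbd]
  · have hBne : ((Vset w).filter fun u => h u < t).Nonempty :=
      Finset.nonempty_iff_ne_empty.2 hB
    obtain ⟨v, hvB, hvmin⟩ := Finset.exists_min_image _ (fun u => toLex (h u, f u)) hBne
    have hvV : v ∈ Vset w := (Finset.mem_filter.1 hvB).1
    have hvt : h v < t := (Finset.mem_filter.1 hvB).2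
    have hvs : s ≤ (h v : EReal) := by
      obtain ⟨τ, hτ, hvr⟩ := mem_Vset.1 hvV
      have := hTup τ hτ {v} (by simpa using hvr)
      exact this.2 v (Finset.mem_singleton_self v)
    have hmin : ∀ u ∈ (Vset w).filter (fun u => h u < t), ¬ lexLt h f u v := by
      intro u hu hcon
      have hle := hvmin u hu
      have hlt : toLex (h u, f u) < toLex (h v, f v) := by
        rw [Prod.Lex.lt_iff]
        exact hcon
      exact absurd hle (not_le.2 hlt)
    -- decompose w into the part containing v and the rest
    set p : (Fin (m + 1 + 1 + 1) → V) → Prop := fun τ => v ∈ Set.range τ with hp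
    set wP := part p w with hwP
    set wQ := part (fun τ => ¬ p τ) w with hwQ
    have hsplit : wP + wQ = w := part_add_part_not p w
    have hPsupp : wP.support = w.support.filter p := support_part p w
    have hQsupp : wQ.support = w.support.filter (fun τ => ¬ p τ) := support_part _ w
    set a := bdF V (m + 1 + 1) wP with ha
    have haeq : a + bdF V (m + 1 + 1) wQ = eps (SubLevel K h (t : EReal)) (m + 1 + 1) z := by
      rw [ha, ← map_add, hsplit, hbd]
    have hQfree : ∀ σ ∈ (bdF V (m + 1 + 1) wQ).support, v ∉ Set.range σ := by
      intro σ hσ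
      obtain ⟨τ, hτ, i, rfl⟩ := support_bdF wQ σ hσ
      have hτm : τ ∈ w.support.filter (fun τ => ¬ p τ) := by rw [← hQsupp]; exact hτ
      have hτ' : ¬ p τ := (Finset.mem_filter.1 hτm).2
      intro hcon
      apply hτ'
      obtain ⟨j, hj⟩ := hcon
      exact ⟨Fin.succAbove i j, hj⟩
    have hzfree : ∀ σ ∈ (eps (SubLevel K h (t : EReal)) (m + 1 + 1) z).support,
        v ∉ Set.range σ := by
      intro σ hσ hcon
      have hT := support_eps_tup _ _ z σ hσ
      have := (hT {v} (by simpa using hcon)).2 v (Finset.mem_singleton_self v)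
      rw [EReal.coe_le_coe_iff] at this
      linarith
    have hafree : ∀ σ ∈ a.support, v ∉ Set.range σ := by
      have haeq2 : a = eps (SubLevel K h (t : EReal)) (m + 1 + 1) z -
          bdF V (m + 1 + 1) wQ := by
        rw [eq_sub_iff_add_eq]
        exact haeq
      intro σ hσ
      rw [haeq2] at hσ
      rcases Finset.mem_union.1 (support_sub' _ _ hσ) with h1 | h1
      exacts [hzfree σ h1, hQfree σ h1]
    have haTup : ∀ σ ∈ a.support, Tup (AscLk K h f v) σ := by
      intro σ hσ
      obtain ⟨τ, hτP, i, rfl⟩ := support_bdF wP σ hσ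
      have hτm : τ ∈ w.support.filter p := by rw [← hPsupp]; exact hτP
      have hτw : τ ∈ w.support := (Finset.mem_filter.1 hτm).1
      have hτp : p τ := (Finset.mem_filter.1 hτm).2
      have hτT := hTup τ hτw
      have hfree := hafree _ hσ
      intro s' hs'
      have hsub : ∀ x ∈ s', x ∈ Set.range τ := fun x hx => by
        obtain ⟨j, hj⟩ := hs' x hx
        exact ⟨Fin.succAbove i j, hj⟩
      refine ⟨fun hvs' => hfree (hs' v hvs'), ?_, ?_⟩
      · have hall : ∀ x ∈ insert v s', x ∈ Set.range τ := by
          intro x hx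
          rcases Finset.mem_insert.1 hx with rfl | hx
          · exact hτp
          · exact hsub x hx
        exact (hτT _ hall).1
      · intro u hu
        have hur : u ∈ Set.range τ := hsub u hu
        have hune : u ≠ v := fun hcon => hfree (hcon ▸ hs' u hu)
        have hadj : ({v, u} : Finset V) ∈ K := by
          have hall : ∀ x ∈ ({v, u} : Finset V), x ∈ Set.range τ := by
            intro x hx
            rcases Finset.mem_insert.1 hx with rfl | hx
            · exact hτp
            · rw [Finset.mem_singleton] at hx
              exact hx ▸ hur
          exact (hτT _ hall).1
        by_cases hut : h u < t
        · have huB : u ∈ (Vset w).filter (fun u => h u < t) :=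
            Finset.mem_filter.2 ⟨mem_Vset.2 ⟨τ, hτw, hur⟩, hut⟩
          have hnlt := hmin u huB
          rcases lt_trichotomy (h u) (h v) with hc | hc | hc
          · exact absurd (Or.inl hc) hnlt
          · have hfne : f v ≠ f u := htie v u hadj (Ne.symm hune) hc.symm
            have hnf : ¬ f u < f v := fun hcon => hnlt (Or.inr ⟨hc, hcon⟩)
            exact Or.inr ⟨hc.symm, lt_of_le_of_ne (not_lt.1 hnf) hfne⟩
          · exact Or.inl hc
        · exact Or.inl (by linarith [not_lt.1 hut])
    obtain ⟨abar, habar⟩ := exists_eps_preimage (AscLk K h f v) _ a haTup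
    have habar0 : bdK (AscLk K h f v) (m + 1) abar = 0 := by
      apply eps_injective
      rw [eps_bdK, habar, ha, map_zero]
      exact bdF_bdF _ wP
    obtain ⟨b, hb⟩ := hlkH v hvs hvt abar habar0
    set βF := eps (AscLk K h f v) (m + 1 + 1 + 1) b with hβF
    have hbdβ : bdF V (m + 1 + 1) βF = a := by
      rw [hβF, ← eps_bdK, hb, habar]
    set w' := wQ + βF with hw'
    have hbd' : bdF V (m + 1 + 1) w' = eps (SubLevel K h (t : EReal)) (m + 1 + 1) z := by
      rw [hw', map_add, hbdβ, ← haeq]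
      exact add_comm _ _
    have hTup' : ∀ τ ∈ w'.support, Tup (SubLevel K h s) τ := by
      intro τ hτ
      rcases Finset.mem_union.1 (support_add' _ _ (hw' ▸ hτ)) with h1 | h1
      · have hτm : τ ∈ w.support.filter (fun τ => ¬ p τ) := by rw [← hQsupp]; exact h1
        exact hTup τ (Finset.mem_filter.1 hτm).1
      · have hT := support_eps_tup _ _ b τ h1
        intro s' hs'
        obtain ⟨hv1, hv2, hv3⟩ := hT s' hs'
        refine ⟨hK _ hv2 s' (Finset.subset_insert v s'), fun u hu => ?_⟩
        have hle : h v ≤ h u := by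
          rcases hv3 u hu with h1 | ⟨h1, _⟩
          exacts [h1.le, le_of_eq h1]
        exact le_trans hvs (EReal.coe_le_coe_iff.2 hle)
    have hNew : ∀ u ∈ Vset βF, u ≠ v ∧ lexLt h f v u ∧ ({v, u} : Finset V) ∈ K := by
      intro u hu
      obtain ⟨τ, hτ, hur⟩ := mem_Vset.1 hu
      have hT := support_eps_tup _ _ b τ hτ
      obtain ⟨hv1, hv2, hv3⟩ := hT {u} (by simpa using hur)
      have hlex := hv3 u (Finset.mem_singleton_self u)
      have hune : u ≠ v := by
        rintro rfl
        rcases hlex with h1 | ⟨h1, h2⟩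
        exacts [lt_irrefl _ h1, lt_irrefl _ h2]
      exact ⟨hune, hlex, by simpa using hv2⟩
    have hBad' : ∀ u ∈ (Vset w').filter (fun u => h u < t),
        u ∈ ((Vset w).filter fun u => h u < t).erase v ∨
          wt h f t εp Frange u < wt h f t εp Frange v := by
      intro u hu
      obtain ⟨huV, hut⟩ := Finset.mem_filter.1 hu
      have hsplit2 : u ∈ Vset wQ ∨ u ∈ Vset βF := by
        obtain ⟨τ, hτ, hur⟩ := mem_Vset.1 huV
        rcases Finset.mem_union.1 (support_add' _ _ (hw' ▸ hτ)) with h1 | h1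
        exacts [Or.inl (mem_Vset.2 ⟨τ, h1, hur⟩), Or.inr (mem_Vset.2 ⟨τ, h1, hur⟩)]
      rcases hsplit2 with h1 | h1
      · left
        obtain ⟨τ, hτ, hur⟩ := mem_Vset.1 h1
        have hτm : τ ∈ w.support.filter (fun τ => ¬ p τ) := by rw [← hQsupp]; exact hτ
        have hτw : τ ∈ w.support := (Finset.mem_filter.1 hτm).1
        have hτnp : ¬ p τ := (Finset.mem_filter.1 hτm).2
        have hune : u ≠ v := by
          intro hcon
          have : v ∈ Set.range τ := hcon ▸ hur
          exact hτnp this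
        exact Finset.mem_erase.2 ⟨hune,
          Finset.mem_filter.2 ⟨mem_Vset.2 ⟨τ, hτw, hur⟩, hut⟩⟩
      · right
        obtain ⟨hune, hlex, hadj⟩ := hNew u h1
        rcases hlex with hc | ⟨hc, hcf⟩
        · have hd := hdisc v u hadj hune.symm (ne_of_lt hc)
          have hstep : h v + εp ≤ h u := by
            rw [abs_of_neg (by linarith : h v - h u < 0)] at hd
            linarith
          exact wt_lt_of_step h f t εp Frange hεp hut hstep
        · exact wt_lt_of_f h f t εp Frange hc.symm hcf (hFr u)
    have hwtv : wt h f t εp Frange v ≤ W := hW v hvB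
    set ω : Fin (W + 1) := ⟨wt h f t εp Frange v, by omega⟩ with hω
    have hsubk : ∀ k : ℕ, wt h f t εp Frange v ≤ k →
        ((Vset w').filter (fun u => h u < t)).filter
            (fun u => wt h f t εp Frange u = k) ⊆
          (((Vset w).filter fun u => h u < t).erase v).filter
            (fun u => wt h f t εp Frange u = k) := by
      intro k hk u hu
      obtain ⟨hu1, hu2⟩ := Finset.mem_filter.1 hu
      rcases hBad' u hu1 with hcase | hcase
      · exact Finset.mem_filter.2 ⟨hcase, hu2⟩
      · exact absurd hu2 (by omega)
    have hdec : Pi.Lex (fun a b : Fin (W + 1) => a > b)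
        (fun {_} => ((· < ·) : ℕ → ℕ → Prop)) (msr w') (msr w) := by
      apply lex_decrease (msr w') (msr w) ω
      · -- strict decrease at ω
        have h1 := Finset.card_le_card (hsubk (ω : ℕ) le_rfl)
        have h2 : ((((Vset w).filter fun u => h u < t).erase v).filter
            (fun u => wt h f t εp Frange u = (ω : ℕ))).card <
            (((Vset w).filter fun u => h u < t).filter
              (fun u => wt h f t εp Frange u = (ω : ℕ))).card := by
          rw [Finset.filter_erase]
          apply Finset.card_erase_lt_of_mem
          exact Finset.mem_filter.2 ⟨hvB, rfl⟩
        exact lt_of_le_of_lt h1 h2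
      · intro k hk
        have hk' : wt h f t εp Frange v ≤ (k : ℕ) := by
          have h1 : (ω : ℕ) < (k : ℕ) := hk
          have h2 : (ω : ℕ) = wt h f t εp Frange v := rfl
          omega
        refine Finset.card_le_card ((hsubk (k : ℕ) hk').trans ?_)
        intro u hu
        obtain ⟨hu1, hu2⟩ := Finset.mem_filter.1 hu
        exact Finset.mem_filter.2 ⟨Finset.mem_of_mem_erase hu1, hu2⟩
    have hW' : ∀ u ∈ (Vset w').filter (fun u => h u < t), wt h f t εp Frange u ≤ W := by
      intro u hu
      rcases hBad' u hu with hcase | hcase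
      · exact hW u (Finset.mem_of_mem_erase hcase)
      · omega
    exact IH w' hdec hTup' hW' hbd'

end Main

end M14

/-- With the hypotheses of the two-variable Morse Lemma, if additionally every vertex `v`
with `s ≤ h(v) < t` satisfies `H̃_{m+1}(lk^↑ v) = 0`, then the inclusion
`Y_{h≥t} → Y_{h≥s}` induces an injection on reduced homology `H̃_{m+1}`: every reduced
cycle of degree `m+1` in `Y_{h≥t}` which becomes a boundary in `Y_{h≥s}` is already a
boundary in `Y_{h≥t}`. -/
theorem stmt14 {V : Type} [DecidableEq V] (K : Set (Finset V)) (hK : IsCpx K)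
    (h f : V → ℝ) (m : ℕ)
    (hdisc : ∃ ε > (0 : ℝ), ∀ v w : V, ({v, w} : Finset V) ∈ K → v ≠ w →
      h v ≠ h w → ε ≤ |h v - h w|)
    (hfin : (Set.range f).Finite)
    (htie : ∀ v w : V, ({v, w} : Finset V) ∈ K → v ≠ w → h v = h w → f v ≠ f w)
    (t : ℝ) (s : EReal) (hst : s < (t : EReal))
    (hlk : ∀ v : V, s ≤ (h v : EReal) → h v < t →
      IsConnTop (Realization (AscLk K h f v)) ((m : ℤ) - 1))
    (hlkH : ∀ v : V, s ≤ (h v : EReal) → h v < t →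
      ∀ z : ChainsK (AscLk K h f v) (m + 1 + 1),
        bdK (AscLk K h f v) (m + 1) z = 0 →
        z ∈ Set.range (bdK (AscLk K h f v) (m + 1 + 1))) :
    ∀ z : ChainsK (SubLevel K h (t : EReal)) (m + 1 + 1),
      bdK (SubLevel K h (t : EReal)) (m + 1) z = 0 →
      chainIncl (K := SubLevel K h (t : EReal)) (K' := SubLevel K h s)
          (fun σ hσ => ⟨hσ.1, fun v hv => le_trans hst.le (hσ.2 v hv)⟩) (m + 1 + 1) z ∈
        Set.range (bdK (SubLevel K h s) (m + 1 + 1)) →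
      z ∈ Set.range (bdK (SubLevel K h (t : EReal)) (m + 1 + 1)) := by
  intro z _hz hw
  classical
  obtain ⟨w₀, hw₀⟩ := hw
  obtain ⟨εp, hεp, hdisc'⟩ := hdisc
  set Frange : Finset ℝ := hfin.toFinset with hFrange
  have hFr : ∀ u : V, f u ∈ Frange := fun u => hfin.mem_toFinset.2 ⟨u, rfl⟩
  set w : M14.FC V (m + 1 + 1 + 1) := M14.eps (SubLevel K h s) (m + 1 + 1 + 1) w₀ with hww
  have hbd : M14.bdF V (m + 1 + 1) w = M14.eps (SubLevel K h (t : EReal)) (m + 1 + 1) z := by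
    rw [hww, ← M14.eps_bdK, hw₀]
    exact M14.eps_chainIncl _ _ z
  have hTup : ∀ τ ∈ w.support, M14.Tup (SubLevel K h s) τ :=
    M14.support_eps_tup _ _ w₀
  set W : ℕ := ((M14.Vset w).filter fun u => h u < t).sup (M14.wt h f t εp Frange) with hWdef
  have hW : ∀ u ∈ (M14.Vset w).filter (fun u => h u < t),
      M14.wt h f t εp Frange u ≤ W := fun u hu => Finset.le_sup hu
  exact M14.descend K hK h f m εp hεp hdisc' Frange hFr htie t s hlkH z W w hTup hW hbd
end

section
/- If P ⊆ E = {1,1̄,...,n,n̄} is a positive subset (ī ∈ P implies i ∈ P) with defect zero (i ∈ P implies ī ∈ P) and weight w(P) ≥ 2 (where weight counts the pairs {j,j̄} ⊆ P), then the complex I^↑(P;pos) of ascending symmetric ideal edges contained in P is covered by the stars of the hubs Θ_i := P \ {ī} for i ∈ P ∩ [n], the intersection of the stars of k distinct hubs Θ_{i_1},...,Θ_{i_k} is isomorphic to I^↑(P \ {ī_1,...,ī_k}; pos), and the nerve of this covering is the boundary of a (w(P)-1)-simplex. -/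
lemma notSplitsP {n : ℕ} {P : Finset (Fin n × Bool)}
    (hpos : ∀ i : Fin n, ((i, true) ∈ P ↔ (i, false) ∈ P)) (j : Fin n) :
    ¬ Splits P j := by
  rintro (⟨h1, h2⟩ | ⟨h1, h2⟩)
  · exact h2 ((hpos j).mpr h1)
  · exact h2 ((hpos j).mp h1)

lemma compat_hub_iff {n : ℕ} {P A : Finset (Fin n × Bool)}
    (hpos : ∀ i : Fin n, ((i, true) ∈ P ↔ (i, false) ∈ P))
    (hA : IsSIE A) (hAP : A ⊆ P) (i : Fin n) :
    Compat A (P.erase (i, true)) ↔ (i, true) ∉ A := by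
  constructor
  · rintro (h | h | h)
    · intro hm; exact (Finset.mem_erase.mp (h hm)).1 rfl
    · intro hm
      have hPA : P ⊆ A := fun x hx => by
        by_cases hx' : x = (i, true)
        · exact hx' ▸ hm
        · exact h (Finset.mem_erase.mpr ⟨hx', hx⟩)
      have hAeq : A = P := Finset.Subset.antisymm hAP hPA
      obtain ⟨j, hj, -⟩ := hA.2.2
      exact absurd (hAeq ▸ hj) (notSplitsP hpos j)
    · intro hm
      have hsub : A ⊆ {(i, true)} := by
        intro x hx
        rcases eq_or_ne x (i, true) with rfl | hne
        · exact Finset.mem_singleton_self _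
        · exact absurd (Finset.mem_erase.mpr ⟨hne, hAP hx⟩)
            (Finset.disjoint_left.mp h hx)
      have := Finset.card_le_card hsub
      have h2 := hA.1
      simp at this
      omega
  · intro hm
    exact Or.inl (fun x hx => Finset.mem_erase.mpr ⟨fun e => hm (e ▸ hx), hAP hx⟩)

lemma hub_in_struct {n : ℕ} {A : Finset (Fin n × Bool)} (i j : Fin n)
    (h : Splits A i) (hasc : ∀ k : Fin n, Splits A k → (k, false) ∈ A) :
    (i, false) ∈ A ∧ (i, true) ∉ A := by
  have hf := hasc i h
  rcases h with ⟨h1, h2⟩ | ⟨h1, h2⟩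
  · exact ⟨hf, h2⟩
  · exact absurd hf h2

theorem part1 (n : ℕ) (P : Finset (Fin n × Bool))
    (hpos : ∀ i : Fin n, ((i, true) ∈ P ↔ (i, false) ∈ P))
    (hw : 2 ≤ (Finset.univ.filter fun i : Fin n => (i, false) ∈ P).card) :
    (∀ S : Finset (Finset (Fin n × Bool)),
      (∀ A ∈ S, IsAscSIE A ∧ A ⊆ P) → (∀ A ∈ S, ∀ B ∈ S, Compat A B) →
      ∃ i : Fin n, (i, false) ∈ P ∧ ∀ A ∈ S, Compat A (P.erase (i, true))) := by
  intro S hS hcompat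
  rcases S.eq_empty_or_nonempty with rfl | hne
  · have : (Finset.univ.filter fun i : Fin n => (i, false) ∈ P).Nonempty := by
      rw [← Finset.card_pos]; omega
    obtain ⟨i, hi⟩ := this
    exact ⟨i, (Finset.mem_filter.mp hi).2, fun A hA => absurd hA (by simp)⟩
  · obtain ⟨A, hAS, hmax⟩ := S.exists_maximal hne
    obtain ⟨⟨hsie, hasc⟩, hAP⟩ := hS A hAS
    obtain ⟨j, hj, hjuniq⟩ := hsie.2.2
    obtain ⟨hjf, hjt⟩ := hub_in_struct j j hj hasc
    refine ⟨j, hAP hjf, fun B hBS => ?_⟩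
    obtain ⟨⟨hBsie, hBasc⟩, hBP⟩ := hS B hBS
    rw [compat_hub_iff hpos hBsie hBP]
    rcases hcompat A hAS B hBS with h | h | h
    · have : A = B := by
        by_contra hne'
        exact hne' (le_antisymm h (hmax hBS h))
      exact this ▸ hjt
    · exact fun hm => hjt (h hm)
    · intro hm
      have hnf : (j, false) ∉ B := Finset.disjoint_left.mp h hjf
      have : Splits B j := Or.inr ⟨hm, hnf⟩
      exact hnf (hBasc j this)

theorem part2 (n : ℕ) (P : Finset (Fin n × Bool))
    (hpos : ∀ i : Fin n, ((i, true) ∈ P ↔ (i, false) ∈ P)) :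
    (∀ T : Finset (Fin n), T.Nonempty → (∀ i ∈ T, (i, false) ∈ P) →
      ∀ S : Finset (Finset (Fin n × Bool)),
        (((∀ A ∈ S, IsAscSIE A ∧ A ⊆ P) ∧ (∀ A ∈ S, ∀ B ∈ S, Compat A B) ∧
            ∀ i ∈ T, ∀ A ∈ S, Compat A (P.erase (i, true))) ↔
          ((∀ A ∈ S, IsAscSIE A ∧ A ⊆ P \ T.image (fun i => (i, true))) ∧
            (∀ A ∈ S, ∀ B ∈ S, Compat A B)))) := by
  intro T _ _ S
  constructor
  · rintro ⟨h1, h2, h3⟩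
    refine ⟨fun A hA => ⟨(h1 A hA).1, fun x hx => ?_⟩, h2⟩
    obtain ⟨hsie, hAP⟩ := h1 A hA
    rw [Finset.mem_sdiff]
    refine ⟨hAP hx, fun hmem => ?_⟩
    obtain ⟨i, hiT, hix⟩ := Finset.mem_image.mp hmem
    have := (compat_hub_iff hpos hsie.1 hAP i).mp (h3 i hiT A hA)
    exact this (hix ▸ hx)
  · rintro ⟨h1, h2⟩
    have hsub : ∀ A ∈ S, A ⊆ P := fun A hA x hx =>
      (Finset.mem_sdiff.mp ((h1 A hA).2 hx)).1
    refine ⟨fun A hA => ⟨(h1 A hA).1, hsub A hA⟩, h2, fun i hiT A hA => ?_⟩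
    rw [compat_hub_iff hpos (h1 A hA).1.1 (hsub A hA)]
    intro hm
    have := (Finset.mem_sdiff.mp ((h1 A hA).2 hm)).2
    exact this (Finset.mem_image.mpr ⟨i, hiT, rfl⟩)

theorem part3 (n : ℕ) (P : Finset (Fin n × Bool))
    (hpos : ∀ i : Fin n, ((i, true) ∈ P ↔ (i, false) ∈ P))
    (hw : 2 ≤ (Finset.univ.filter fun i : Fin n => (i, false) ∈ P).card) :
    (∀ T : Finset (Fin n), T.Nonempty → (∀ i ∈ T, (i, false) ∈ P) →
      ((∃ A : Finset (Fin n × Bool), IsAscSIE A ∧ A ⊆ P ∧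
          ∀ i ∈ T, Compat A (P.erase (i, true))) ↔
        T ≠ Finset.univ.filter fun i : Fin n => (i, false) ∈ P)) := by
  intro T hTne hTP
  constructor
  · rintro ⟨A, ⟨hsie, hasc⟩, hAP, hcomp⟩ rfl
    obtain ⟨j, hj, hjuniq⟩ := hsie.2.2
    -- A ⊆ {(j, false)}
    have hsub : A ⊆ {(j, false)} := by
      intro x hx
      obtain ⟨k, b⟩ := x
      have hkP : (k, false) ∈ P := by
        cases b
        · exact hAP hx
        · exact (hpos k).mp (hAP hx)
      have hkT : k ∈ Finset.univ.filter fun i : Fin n => (i, false) ∈ P :=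
        Finset.mem_filter.mpr ⟨Finset.mem_univ _, hkP⟩
      have hkt : (k, true) ∉ A :=
        (compat_hub_iff hpos hsie hAP k).mp (hcomp k hkT)
      cases b
      · have hsplit : Splits A k := Or.inl ⟨hx, hkt⟩
        rw [hjuniq k hsplit]
        exact Finset.mem_singleton_self _
      · exact absurd hx hkt
    have := Finset.card_le_card hsub
    have h2 := hsie.1
    simp at this
    omega
  · intro hTne'
    have hTsub : T ⊆ Finset.univ.filter fun i : Fin n => (i, false) ∈ P :=
      fun i hi => Finset.mem_filter.mpr ⟨Finset.mem_univ _, hTP i hi⟩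
    obtain ⟨j, hjF, hjT⟩ := Finset.exists_of_ssubset (hTsub.ssubset_of_ne hTne')
    have hjP : (j, false) ∈ P := (Finset.mem_filter.mp hjF).2
    obtain ⟨i, hiT⟩ := hTne
    have hij : i ≠ j := fun h => hjT (h ▸ hiT)
    set A : Finset (Fin n × Bool) := {(i, false), (j, false), (j, true)} with hAdef
    have hmem : ∀ x : Fin n × Bool, x ∈ A ↔ x = (i, false) ∨ x = (j, false) ∨ x = (j, true) := by
      intro x; simp [hAdef]
    have hiA : (i, false) ∈ A := (hmem _).mpr (Or.inl rfl)
    have hitA : (i, true) ∉ A := by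
      rw [hmem]; push_neg
      refine ⟨by simp, by simp [hij], by simp [hij]⟩
    have hsplit_i : Splits A i := Or.inl ⟨hiA, hitA⟩
    have huniq : ∀ k : Fin n, Splits A k → k = i := by
      intro k hk
      rcases eq_or_ne k j with rfl | hkj
      · exfalso
        rcases hk with ⟨h1, h2⟩ | ⟨h1, h2⟩
        · exact h2 ((hmem _).mpr (Or.inr (Or.inr rfl)))
        · exact h2 ((hmem _).mpr (Or.inr (Or.inl rfl)))
      · have hknt : (k, true) ∉ A := by
          rw [hmem]; push_neg
          refine ⟨by simp, by simp [hkj], by simp [hkj]⟩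
        rcases hk with ⟨h1, _⟩ | ⟨h1, _⟩
        · rcases (hmem _).mp h1 with h | h | h
          · exact (Prod.ext_iff.mp h).1
          · exact absurd (Prod.ext_iff.mp h).1 hkj
          · simp at h
        · exact absurd h1 hknt
    have hcard : 2 ≤ A.card := by
      have : ({(j, false), (j, true)} : Finset (Fin n × Bool)) ⊆ A := by
        intro x hx; rw [hmem]
        rcases Finset.mem_insert.mp hx with h | h
        · exact Or.inr (Or.inl h)
        · exact Or.inr (Or.inr (Finset.mem_singleton.mp h))
      have h2 : ({(j, false), (j, true)} : Finset (Fin n × Bool)).card = 2 := by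
        rw [Finset.card_insert_of_notMem (by simp), Finset.card_singleton]
      calc 2 = _ := h2.symm
        _ ≤ A.card := Finset.card_le_card this
    have hneuniv : A ≠ Finset.univ := fun h => hitA (h ▸ Finset.mem_univ _)
    have hsie : IsSIE A := ⟨hcard, hneuniv, ⟨i, hsplit_i, huniq⟩⟩
    have hasc : ∀ k : Fin n, Splits A k → (k, false) ∈ A := by
      intro k hk; rw [huniq k hk]; exact hiA
    have hAP : A ⊆ P := by
      intro x hx
      rcases (hmem _).mp hx with rfl | rfl | rfl
      · exact hTP i hiT
      · exact hjP
      · exact (hpos j).mpr hjP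
    refine ⟨A, ⟨hsie, hasc⟩, hAP, fun t htT => ?_⟩
    rw [compat_hub_iff hpos hsie hAP]
    rw [hmem]; push_neg
    have htj : t ≠ j := fun h => hjT (h ▸ htT)
    exact ⟨by simp, by simp [htj], by simp [htj]⟩

/-- For a positive defect-zero subset `P ⊆ E` of weight at least `2`:
(1) every simplex of `I^↑(P;pos)` (a pairwise compatible family of ascending symmetric
ideal edges contained in `P`) lies in the star of some hub `Θ_i = P \ {ī}`;
(2) the intersection of the stars of the hubs `Θ_i`, `i ∈ T`, is exactly
`I^↑(P \ {ī : i ∈ T}; pos)`;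
(3) the nerve of the covering by the stars is the boundary of the `(w(P)-1)`-simplex:
a set `T` of hubs has a common vertex in their stars iff `T` is not all of the hubs. -/
theorem stmt19 (n : ℕ) (P : Finset (Fin n × Bool))
    (hpos : ∀ i : Fin n, ((i, true) ∈ P ↔ (i, false) ∈ P))
    (hw : 2 ≤ (Finset.univ.filter fun i : Fin n => (i, false) ∈ P).card) :
    (∀ S : Finset (Finset (Fin n × Bool)),
      (∀ A ∈ S, IsAscSIE A ∧ A ⊆ P) → (∀ A ∈ S, ∀ B ∈ S, Compat A B) →
      ∃ i : Fin n, (i, false) ∈ P ∧ ∀ A ∈ S, Compat A (P.erase (i, true))) ∧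
    (∀ T : Finset (Fin n), T.Nonempty → (∀ i ∈ T, (i, false) ∈ P) →
      ∀ S : Finset (Finset (Fin n × Bool)),
        (((∀ A ∈ S, IsAscSIE A ∧ A ⊆ P) ∧ (∀ A ∈ S, ∀ B ∈ S, Compat A B) ∧
            ∀ i ∈ T, ∀ A ∈ S, Compat A (P.erase (i, true))) ↔
          ((∀ A ∈ S, IsAscSIE A ∧ A ⊆ P \ T.image (fun i => (i, true))) ∧
            (∀ A ∈ S, ∀ B ∈ S, Compat A B)))) ∧
    (∀ T : Finset (Fin n), T.Nonempty → (∀ i ∈ T, (i, false) ∈ P) →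
      ((∃ A : Finset (Fin n × Bool), IsAscSIE A ∧ A ⊆ P ∧
          ∀ i ∈ T, Compat A (P.erase (i, true))) ↔
        T ≠ Finset.univ.filter fun i : Fin n => (i, false) ∈ P)) :=
  ⟨part1 n P hpos hw, part2 n P hpos, part3 n P hpos hw⟩
end
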